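/- arXiv:2512.18188 — 7 statements merged into one kernel-verified Lean document; each statement's English description precedes it below -/
import Mathlib

section
/- For every integer k ≥ 1, the infimum over x ∈ [0,1] of max_{0 ≤ m ≤ k} C(k,m)·x^(k−m)·(1−x)^m equals C(k, ⌊k/2⌋) · ( ⌊(k+1)/2⌋·⌈(k+1)/2⌉ / (⌊(k+1)/2⌋+⌈(k+1)/2⌉)² )^(k/2). -/
lemma estep (t : ℕ) : (t+1)^(2*t+1) ≤ t^t * (t+2)^(t+1) := by
  rcases Nat.eq_zero_or_pos t with rfl | ht
  · norm_num
  have htR : (1:ℝ) ≤ (t:ℝ) := by exact_mod_cast ht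
  have hsq : (0:ℝ) < ((t:ℝ)+1)^2 := by positivity
  have hb : (-2 : ℝ) ≤ -(1/((t:ℝ)+1)^2) := by
    have h2 : 1/((t:ℝ)+1)^2 ≤ 1 := by rw [div_le_one hsq]; nlinarith
    linarith
  have key := one_add_mul_le_pow hb (t+1)
  have e1 : (1 + -(1/((t:ℝ)+1)^2)) = ((t:ℝ)*((t:ℝ)+2))/((t:ℝ)+1)^2 := by
    field_simp; ring
  have e2 : (1 : ℝ) + ((t:ℕ)+1 : ℕ) * (-(1/((t:ℝ)+1)^2)) = (t:ℝ)/((t:ℝ)+1) := by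
    push_cast; field_simp; ring
  rw [e2, e1, div_pow] at key
  have hpos : (0:ℝ) < (((t:ℝ)+1)^2)^(t+1) := by positivity
  rw [div_le_div_iff₀ (by positivity) hpos] at key
  have key2 : ((t:ℝ) * ((t:ℝ)+1)^(2*t+1)) * ((t:ℝ)+1) ≤ ((t:ℝ) * ((t:ℝ)^t * ((t:ℝ)+2)^(t+1))) * ((t:ℝ)+1) := by
    calc ((t:ℝ) * ((t:ℝ)+1)^(2*t+1)) * ((t:ℝ)+1) = (t:ℝ) * (((t:ℝ)+1)^2)^(t+1) := by
          rw [← pow_mul]; ring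
    _ ≤ ((t:ℝ)*((t:ℝ)+2))^(t+1) * ((t:ℝ)+1) := key
    _ = ((t:ℝ) * ((t:ℝ)^t * ((t:ℝ)+2)^(t+1))) * ((t:ℝ)+1) := by rw [mul_pow]; ring
  have h1 : (0:ℝ) < (t:ℝ) := by linarith
  have h2 : (0:ℝ) < (t:ℝ)+1 := by linarith
  have key3 : ((t:ℝ)+1)^(2*t+1) ≤ (t:ℝ)^t * ((t:ℝ)+2)^(t+1) :=
    (mul_le_mul_iff_right₀ h1).mp ((mul_le_mul_iff_left₀ h2).mp key2)
  exact_mod_cast key3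

lemma emono {s t : ℕ} (h : s ≤ t) : (s+1)^s * t^t ≤ s^s * (t+1)^t := by
  induction t with
  | zero => interval_cases s <;> simp
  | succ n ih =>
    rcases Nat.lt_or_ge s (n+1) with hs | hs
    · have hsn : s ≤ n := by omega
      have ihn := ih hsn
      rcases Nat.eq_zero_or_pos n with rfl | hn
      · interval_cases s <;> norm_num
      have h1 : (s+1)^s * (n+1)^(n+1) * n^n ≤ s^s * ((n+1)^n * (n+1)^(n+1)) := by
        calc (s+1)^s * (n+1)^(n+1) * n^n = ((s+1)^s * n^n) * (n+1)^(n+1) := by ring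
        _ ≤ (s^s * (n+1)^n) * (n+1)^(n+1) := Nat.mul_le_mul_right _ ihn
        _ = s^s * ((n+1)^n * (n+1)^(n+1)) := by ring
      have h2 : (n+1)^n * (n+1)^(n+1) = (n+1)^(2*n+1) := by rw [← pow_add]; ring_nf
      have h4 : (s+1)^s * (n+1)^(n+1) * n^n ≤ s^s * (n+2)^(n+1) * n^n := by
        calc (s+1)^s * (n+1)^(n+1) * n^n ≤ s^s * ((n+1)^n * (n+1)^(n+1)) := h1
        _ = s^s * (n+1)^(2*n+1) := by rw [h2]
        _ ≤ s^s * (n^n * (n+2)^(n+1)) := Nat.mul_le_mul_left _ (estep n)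
        _ = s^s * (n+2)^(n+1) * n^n := by ring
      exact Nat.le_of_mul_le_mul_right h4 (pow_pos hn n)
    · have : s = n+1 := by omega
      subst this
      exact le_of_eq (mul_comm _ _)


lemma chain (f : ℕ → ℕ) {lo hi : ℕ} (hle : lo ≤ hi)
    (h : ∀ j, lo ≤ j → j < hi → f j ≤ f (j+1)) : f lo ≤ f hi := by
  induction hi, hle using Nat.le_induction with
  | base => exact le_refl _
  | succ n hn ih =>
    exact le_trans (ih (fun j hj hj' => h j hj (hj'.trans (Nat.lt_succ_self n))))
      (h n hn (Nat.lt_succ_self n))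

lemma chain' (f : ℕ → ℕ) {lo hi : ℕ} (hle : lo ≤ hi)
    (h : ∀ j, lo ≤ j → j < hi → f (j+1) ≤ f j) : f hi ≤ f lo := by
  induction hi, hle using Nat.le_induction with
  | base => exact le_refl _
  | succ n hn ih =>
    exact le_trans (h n hn (Nat.lt_succ_self n))
      (ih (fun j hj hj' => h j hj (hj'.trans (Nat.lt_succ_self n))))

/-- U k a m = C(k,m) (k-a)^(k-m) (a+1)^m -/
def Uf (k a m : ℕ) : ℕ := k.choose m * (k-a)^(k-m) * (a+1)^m

/-- W k j = C(k,j) (k-j)^(k-j) (j+1)^j -/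
def Wf (k j : ℕ) : ℕ := k.choose j * (k-j)^(k-j) * (j+1)^j

lemma Umax (k a : ℕ) (ha : a ≤ k) : ∀ m ≤ k, Uf k a m ≤ Uf k a a := by
  have stepup : ∀ m, m < a → Uf k a m ≤ Uf k a (m+1) := by
    intro m hm
    obtain ⟨c, hc⟩ : ∃ c, k = m + (c + 1) := ⟨k - m - 1, by omega⟩
    obtain ⟨b, hb⟩ : ∃ b, k = a + b := ⟨k - a, by omega⟩
    have hkm : k - m = c + 1 := by omega
    have hkm1 : k - (m+1) = c := by omega
    have hka : k - a = b := by omega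
    have hch : k.choose (m+1) * (m+1) = k.choose m * (c+1) := by
      rw [Nat.choose_succ_right_eq, hkm]
    have key : b * (m+1) ≤ (c+1) * (a+1) := by nlinarith [hm, hc, hb]
    refine Nat.le_of_mul_le_mul_right ?_ (Nat.succ_pos m)
    calc Uf k a m * (m+1) = k.choose m * (b^c * (b * (m+1)) * (a+1)^m) := by
          simp only [Uf, hka, hkm]; ring
    _ ≤ k.choose m * (b^c * ((c+1) * (a+1)) * (a+1)^m) :=
          Nat.mul_le_mul_left _ (Nat.mul_le_mul_right _ (Nat.mul_le_mul_left _ key))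
    _ = (k.choose m * (c+1)) * (b^c * (a+1)^(m+1)) := by ring
    _ = Uf k a (m+1) * (m+1) := by rw [← hch]; simp only [Uf, hka, hkm1]; ring
  have stepdown : ∀ m, a ≤ m → m < k → Uf k a (m+1) ≤ Uf k a m := by
    intro m hm hmk
    obtain ⟨c, hc⟩ : ∃ c, k = m + (c + 1) := ⟨k - m - 1, by omega⟩
    obtain ⟨b, hb⟩ : ∃ b, k = a + b := ⟨k - a, by omega⟩
    have hkm : k - m = c + 1 := by omega
    have hkm1 : k - (m+1) = c := by omega
    have hka : k - a = b := by omega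
    have hch : k.choose (m+1) * (m+1) = k.choose m * (c+1) := by
      rw [Nat.choose_succ_right_eq, hkm]
    have key : (c+1) * (a+1) ≤ b * (m+1) := by nlinarith [hm, hc, hb]
    refine Nat.le_of_mul_le_mul_right ?_ (Nat.succ_pos m)
    calc Uf k a (m+1) * (m+1) = (k.choose m * (c+1)) * (b^c * (a+1)^(m+1)) := by
          rw [← hch]; simp only [Uf, hka, hkm1]; ring
    _ = k.choose m * (b^c * ((c+1) * (a+1)) * (a+1)^m) := by ring
    _ ≤ k.choose m * (b^c * (b * (m+1)) * (a+1)^m) :=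
          Nat.mul_le_mul_left _ (Nat.mul_le_mul_right _ (Nat.mul_le_mul_left _ key))
    _ = Uf k a m * (m+1) := by simp only [Uf, hka, hkm]; ring
  intro m hm
  rcases le_or_gt m a with h | h
  · exact chain (Uf k a) h (fun j hj hj' => stepup j hj')
  · exact chain' (Uf k a) h.le (fun j hj hj' => stepdown j hj (by omega))

lemma Wmin (k : ℕ) (hk : 1 ≤ k) : ∀ j ≤ k, Wf k (k/2) ≤ Wf k j := by
  set a := k / 2 with ha
  have hak : a ≤ k := Nat.div_le_self k 2
  have stepdown : ∀ j, j < a → Wf k (j+1) ≤ Wf k j := by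
    intro j hj
    obtain ⟨d, hd⟩ : ∃ d, k = j + 1 + d := ⟨k - j - 1, by omega⟩
    have hkj : k - j = d + 1 := by omega
    have hkj1 : k - (j+1) = d := by omega
    have hch : k.choose (j+1) * (j+1) = k.choose j * (d+1) := by
      rw [Nat.choose_succ_right_eq, hkj]
    have hst : j + 1 ≤ d := by omega
    have key := emono hst  -- (j+2)^(j+1) * d^d ≤ (j+1)^(j+1) * (d+1)^d
    refine Nat.le_of_mul_le_mul_right ?_ (Nat.succ_pos j)
    calc Wf k (j+1) * (j+1) = (k.choose j * (d+1)) * (d^d * (j+2)^(j+1)) := by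
          rw [← hch]; simp only [Wf, hkj1]; ring
    _ = k.choose j * (d+1) * ((j+2)^(j+1) * d^d) := by ring
    _ ≤ k.choose j * (d+1) * ((j+1)^(j+1) * (d+1)^d) := Nat.mul_le_mul_left _ key
    _ = Wf k j * (j+1) := by simp only [Wf, hkj]; ring
  have stepup : ∀ j, a ≤ j → j < k → Wf k j ≤ Wf k (j+1) := by
    intro j hj hjk
    obtain ⟨d, hd⟩ : ∃ d, k = j + 1 + d := ⟨k - j - 1, by omega⟩
    have hkj : k - j = d + 1 := by omega
    have hkj1 : k - (j+1) = d := by omega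
    have hch : k.choose (j+1) * (j+1) = k.choose j * (d+1) := by
      rw [Nat.choose_succ_right_eq, hkj]
    have hst : d ≤ j + 1 := by omega
    have key := emono hst  -- (d+1)^d * (j+1)^(j+1) ≤ d^d * (j+2)^(j+1)
    refine Nat.le_of_mul_le_mul_right ?_ (Nat.succ_pos j)
    calc Wf k j * (j+1) = k.choose j * (d+1) * ((d+1)^d * (j+1)^(j+1)) := by
          simp only [Wf, hkj]; ring
    _ ≤ k.choose j * (d+1) * (d^d * (j+2)^(j+1)) := Nat.mul_le_mul_left _ key
    _ = (k.choose j * (d+1)) * (d^d * (j+2)^(j+1)) := by ring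
    _ = Wf k (j+1) * (j+1) := by rw [← hch]; simp only [Wf, hkj1]; ring
  intro j hj
  rcases le_or_gt j a with h | h
  · exact chain' (Wf k) h (fun i hi hi' => stepdown i hi')
  · exact chain (Wf k) h.le (fun i hi hi' => stepup i hi (by omega))


lemma quasi (p q : ℕ) {u v x : ℝ} (h0 : 0 ≤ u) (huv : u ≤ x) (hxv : x ≤ v) (hv1 : v ≤ 1) :
    min (u^p * (1-u)^q) (v^p * (1-v)^q) ≤ x^p * (1-x)^q := by
  rcases eq_or_lt_of_le (huv.trans hxv) with heq | hlt
  · have hxu : x = u := le_antisymm (heq ▸ hxv) huv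
    subst hxu
    exact min_le_left _ _
  set t : ℝ := (v - x) / (v - u) with htdef
  have hvu : (0:ℝ) < v - u := by linarith
  have ht0 : 0 ≤ t := div_nonneg (by linarith) hvu.le
  have ht1 : t ≤ 1 := by rw [htdef, div_le_one hvu]; linarith
  have hs0 : 0 ≤ 1 - t := by linarith
  have hsum : t + (1 - t) = 1 := by ring
  have hxe : t * u + (1 - t) * v = x := by
    rw [htdef]; field_simp; ring
  have hv0 : 0 ≤ v := h0.trans (huv.trans hxv)
  have h1u : 0 ≤ 1 - u := by linarith [huv.trans (hxv.trans hv1)]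
  have h1v : 0 ≤ 1 - v := by linarith
  have hA : u ^ t * v ^ (1 - t) ≤ x := by
    calc u ^ t * v ^ (1 - t) ≤ t * u + (1 - t) * v :=
      Real.geom_mean_le_arith_mean2_weighted ht0 hs0 h0 hv0 hsum
    _ = x := hxe
  have hB : (1-u) ^ t * (1-v) ^ (1 - t) ≤ 1 - x := by
    calc (1-u) ^ t * (1-v) ^ (1 - t) ≤ t * (1-u) + (1 - t) * (1-v) :=
      Real.geom_mean_le_arith_mean2_weighted ht0 hs0 h1u h1v hsum
    _ = 1 - x := by rw [← hxe]; ring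
  have hA0 : 0 ≤ u ^ t * v ^ (1 - t) := by positivity
  have hB0 : 0 ≤ (1-u) ^ t * (1-v) ^ (1 - t) := by positivity
  have step1 : (u ^ t * v ^ (1 - t))^p * ((1-u) ^ t * (1-v) ^ (1 - t))^q ≤ x^p * (1-x)^q :=
    mul_le_mul (pow_le_pow_left₀ hA0 hA p) (pow_le_pow_left₀ hB0 hB q)
      (pow_nonneg hB0 q) (pow_nonneg (h0.trans huv) p)
  have swap : ∀ (w : ℝ), 0 ≤ w → ∀ (r : ℝ) (n : ℕ), (w ^ r) ^ n = (w ^ n : ℝ) ^ r := by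
    intro w hw r n
    rw [← Real.rpow_natCast (w ^ r) n, ← Real.rpow_natCast w n,
      ← Real.rpow_mul hw, ← Real.rpow_mul hw, mul_comm]
  set m1 := u^p * (1-u)^q with hm1def
  set m2 := v^p * (1-v)^q with hm2def
  have hm1 : (0:ℝ) ≤ m1 := by rw [hm1def]; positivity
  have hm2 : (0:ℝ) ≤ m2 := by rw [hm2def]; positivity
  have hmin0 : (0:ℝ) ≤ min m1 m2 := le_min hm1 hm2
  have e3 : m1 ^ t * m2 ^ (1-t) = (u ^ t * v ^ (1 - t))^p * ((1-u) ^ t * (1-v) ^ (1 - t))^q := by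
    rw [hm1def, hm2def, Real.mul_rpow (by positivity) (by positivity),
      Real.mul_rpow (by positivity) (by positivity), mul_pow, mul_pow,
      swap u h0 t p, swap v hv0 (1-t) p, swap (1-u) h1u t q, swap (1-v) h1v (1-t) q]
    ring
  have final : min m1 m2 ≤ m1 ^ t * m2 ^ (1-t) := by
    calc min m1 m2 = (min m1 m2) ^ t * (min m1 m2) ^ (1-t) := by
          rw [← Real.rpow_add' hmin0 (by norm_num), hsum, Real.rpow_one]
    _ ≤ m1 ^ t * m2 ^ (1-t) :=
        mul_le_mul (Real.rpow_le_rpow hmin0 (min_le_left _ _) ht0)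
          (Real.rpow_le_rpow hmin0 (min_le_right _ _) hs0)
          (Real.rpow_nonneg hmin0 _) (Real.rpow_nonneg hm1 _)
  calc min m1 m2 ≤ m1 ^ t * m2 ^ (1-t) := final
  _ = _ := e3
  _ ≤ x^p * (1-x)^q := step1


lemma term_eq (k a m : ℕ) (hm : m ≤ k) :
    (k.choose m : ℝ) * (((k-a : ℕ):ℝ)/((k:ℝ)+1))^(k-m) * (((a:ℝ)+1)/((k:ℝ)+1))^m
      = (Uf k a m : ℝ)/((k:ℝ)+1)^k := by
  rw [div_pow, div_pow]
  calc (k.choose m : ℝ) * (((k-a : ℕ):ℝ)^(k-m)/((k:ℝ)+1)^(k-m)) * (((a:ℝ)+1)^m/((k:ℝ)+1)^m)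
      = (k.choose m : ℝ) * ((k-a : ℕ):ℝ)^(k-m) * ((a:ℝ)+1)^m / (((k:ℝ)+1)^(k-m) * ((k:ℝ)+1)^m) := by
        ring
  _ = (Uf k a m : ℝ)/((k:ℝ)+1)^k := by
        rw [← pow_add, Nat.sub_add_cancel hm, Uf]
        push_cast
        ring

lemma E2 (k m : ℕ) (hm1 : 1 ≤ m) (hmk : m ≤ k) :
    (k.choose m : ℝ) * ((((k-m:ℕ):ℝ)+1)/((k:ℝ)+1))^(k-m) * ((m:ℝ)/((k:ℝ)+1))^m
      = (Wf k (m-1) : ℝ)/((k:ℝ)+1)^k := by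
  obtain ⟨q, rfl⟩ : ∃ q, m = q + 1 := ⟨m - 1, by omega⟩
  obtain ⟨p, rfl⟩ : ∃ p, k = p + (q+1) := ⟨k - (q+1), by omega⟩
  have hsub : p + (q+1) - (q+1) = p := by omega
  have hsub2 : p + (q+1) - q = p + 1 := by omega
  have hsub3 : q + 1 - 1 = q := by omega
  have hch : (p+(q+1)).choose (q+1) * (q+1) = (p+(q+1)).choose q * (p+1) := by
    rw [Nat.choose_succ_right_eq, hsub2]
  have hnat : (p+(q+1)).choose (q+1) * (p+1)^p * (q+1)^(q+1) = Wf (p+(q+1)) q := by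
    rw [Wf, hsub2]
    calc (p+(q+1)).choose (q+1) * (p+1)^p * (q+1)^(q+1)
        = ((p+(q+1)).choose (q+1) * (q+1)) * ((p+1)^p * (q+1)^q) := by ring
    _ = ((p+(q+1)).choose q * (p+1)) * ((p+1)^p * (q+1)^q) := by rw [hch]
    _ = (p+(q+1)).choose q * (p+1)^(p+1) * (q+1)^q := by ring
  set K := p + (q+1) with hK
  rw [hsub, hsub3, div_pow, div_pow]
  have hcast : (Wf K q : ℝ) = (K.choose (q+1) : ℝ) * ((p:ℝ)+1)^p * ((q:ℝ)+1)^(q+1) := by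
    rw [← hnat]; push_cast; ring
  have hKpow : ((K:ℝ)+1)^p * ((K:ℝ)+1)^(q+1) = ((K:ℝ)+1)^K := by
    rw [← pow_add]
  calc (K.choose (q+1) : ℝ) * (((p:ℝ)+1)^p/((K:ℝ)+1)^p) * (((q+1:ℕ):ℝ)^(q+1)/((K:ℝ)+1)^(q+1))
      = ((K.choose (q+1) : ℝ) * ((p:ℝ)+1)^p * ((q:ℝ)+1)^(q+1)) / (((K:ℝ)+1)^p * ((K:ℝ)+1)^(q+1)) := by
        rw [show ((q+1:ℕ):ℝ) = (q:ℝ)+1 by push_cast; ring]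
        have h1 : ((K:ℝ)+1) ≠ 0 := by positivity
        field_simp
  _ = (Wf K q : ℝ)/((K:ℝ)+1)^K := by rw [hcast, hKpow]


lemma hV (k : ℕ) (hk : 1 ≤ k) :
    (k.choose (k / 2) : ℝ) *
        (((((k + 1) / 2 : ℕ) : ℝ) * (((k + 2) / 2 : ℕ) : ℝ)) /
            ((((k + 1) / 2 : ℕ) : ℝ) + (((k + 2) / 2 : ℕ) : ℝ)) ^ 2) ^ ((k : ℝ) / 2)
      = (Wf k (k/2) : ℝ) / ((k:ℝ)+1)^k := by
  rcases Nat.even_or_odd k with ⟨n, hn⟩ | ⟨n, hn⟩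
  · -- k = n + n, n ≥ 1
    have hn1 : 1 ≤ n := by omega
    have e1 : (k+1)/2 = n := by omega
    have e2 : (k+2)/2 = n+1 := by omega
    have e3 : k/2 = n := by omega
    have hexp : (k:ℝ)/2 = (n:ℝ) := by
      rw [hn]; push_cast; ring
    rw [e1, e2, e3, hexp, Real.rpow_natCast]
    have hkk : k - n = n := by omega
    rw [Wf, hkk]
    push_cast
    have hbase : ((n:ℝ) + ((n:ℝ)+1))^2 = (((k:ℝ)+1))^2 := by rw [hn]; push_cast; ring
    rw [hbase, div_pow, ← pow_mul]
    have h2 : ((k:ℝ)+1) ≠ 0 := by positivity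
    have h3 : ((k:ℝ)+1)^(2*n) = ((k:ℝ)+1)^k := by
      congr 1; omega
    rw [h3]
    rw [mul_pow]
    field_simp
  · -- k = 2n+1
    have e1 : (k+1)/2 = n+1 := by omega
    have e2 : (k+2)/2 = n+1 := by omega
    have e3 : k/2 = n := by omega
    rw [e1, e2, e3]
    have hb : ((((n:ℕ)+1:ℕ):ℝ) * (((n:ℕ)+1:ℕ):ℝ)) / ((((n:ℕ)+1:ℕ):ℝ) + (((n:ℕ)+1:ℕ):ℝ))^2
        = (1/4 : ℝ) := by
      push_cast
      rw [div_eq_iff (by positivity)]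
      ring
    rw [hb]
    have hq : (1/4 : ℝ) ^ ((k:ℝ)/2) = (1/2 : ℝ)^k := by
      rw [show (1/4 : ℝ) = (1/2 : ℝ)^(2:ℝ) by
        rw [show (2:ℝ) = ((2:ℕ):ℝ) by norm_num, Real.rpow_natCast]; norm_num]
      rw [← Real.rpow_natCast (1/2 : ℝ) k, ← Real.rpow_mul (by norm_num)]
      congr 1
      ring
    rw [hq]
    have hkk : k - n = n + 1 := by omega
    rw [Wf, hkk]
    push_cast
    have hk1 : ((k:ℝ)+1) = 2*((n:ℝ)+1) := by rw [hn]; push_cast; ring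
    rw [hk1, mul_pow]
    have hpow : ((n:ℝ)+1)^(n+1) * ((n:ℝ)+1)^n = ((n:ℝ)+1)^k := by
      rw [← pow_add]; congr 1; omega
    have h2 : ((n:ℝ)+1) ≠ 0 := by positivity
    have h4 : ((n:ℝ)+1)^k ≠ 0 := by positivity
    rw [mul_assoc, hpow]
    rw [one_div, inv_pow]
    rw [eq_div_iff (by positivity)]
    field_simp

lemma lower (k : ℕ) (hk : 1 ≤ k) {x : ℝ} (hx0 : 0 ≤ x) (hx1 : x ≤ 1) :
    ∃ m, m ≤ k ∧ (Wf k (k/2) : ℝ)/((k:ℝ)+1)^k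
      ≤ (k.choose m : ℝ) * x^(k-m) * (1-x)^m := by
  have hD : (0:ℝ) < (k:ℝ)+1 := by positivity
  have hDk : (0:ℝ) < ((k:ℝ)+1)^k := by positivity
  set i := min k ⌊x*((k:ℝ)+1)⌋₊ with hidef
  have hik : i ≤ k := min_le_left _ _
  set m := k - i with hmdef
  have hkm : k - m = i := by omega
  have hmk : m ≤ k := by omega
  set u : ℝ := (i:ℝ)/((k:ℝ)+1) with hudef
  set v : ℝ := ((i:ℝ)+1)/((k:ℝ)+1) with hvdef
  have hu0 : (0:ℝ) ≤ u := by positivity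
  have hu : u ≤ x := by
    rw [hudef, div_le_iff₀ hD]
    have h1n : i ≤ ⌊x*((k:ℝ)+1)⌋₊ := min_le_right _ _
    have h1 : (i:ℝ) ≤ (⌊x*((k:ℝ)+1)⌋₊ : ℝ) := Nat.cast_le.mpr h1n
    exact h1.trans (Nat.floor_le (by positivity))
  have hv : x ≤ v := by
    rcases le_or_gt (⌊x*((k:ℝ)+1)⌋₊) k with hf | hf
    · have hieq : i = ⌊x*((k:ℝ)+1)⌋₊ := min_eq_right hf
      rw [hvdef, le_div_iff₀ hD]
      have h2 := Nat.lt_floor_add_one (x*((k:ℝ)+1))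
      rw [← hieq] at h2
      linarith
    · have hieq : i = k := min_eq_left hf.le
      rw [hvdef, hieq, le_div_iff₀ hD]
      nlinarith
  have hv1 : v ≤ 1 := by
    rw [hvdef, div_le_one hD]
    have : (i:ℝ) ≤ (k:ℝ) := by exact_mod_cast hik
    linarith
  have hq := quasi i m hu0 hu hv hv1
  have hC : (0:ℝ) ≤ (k.choose m : ℝ) := Nat.cast_nonneg _
  have hmr : (m:ℝ) = (k:ℝ) - (i:ℝ) := by
    rw [hmdef]; push_cast [Nat.cast_sub hik]; ring
  have h1u : 1 - u = ((m:ℝ)+1)/((k:ℝ)+1) := by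
    rw [hudef, eq_div_iff hD.ne', sub_mul, div_mul_cancel₀ _ hD.ne', hmr]; ring
  refine ⟨m, hmk, ?_⟩
  rw [hkm]
  -- V ≤ choose * u-val
  have hterm_u : (k.choose m:ℝ) * (u^i * (1-u)^m) = (Wf k m:ℝ)/((k:ℝ)+1)^k := by
    have h3 := term_eq k m m hmk
    rw [hkm] at h3
    rw [show Uf k m m = Wf k m from rfl] at h3
    rw [h1u, ← mul_assoc]
    exact h3
  have hVu : (Wf k (k/2) : ℝ)/((k:ℝ)+1)^k ≤ (k.choose m:ℝ) * (u^i * (1-u)^m) := by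
    rw [hterm_u]
    gcongr
    exact_mod_cast Wmin k hk m hmk
  have hVv : (Wf k (k/2) : ℝ)/((k:ℝ)+1)^k ≤ (k.choose m:ℝ) * (v^i * (1-v)^m) := by
    rcases Nat.eq_zero_or_pos m with hm0 | hm1
    · have hieq : i = k := by omega
      have hveq : v = 1 := by rw [hvdef, hieq]; exact div_self hD.ne'
      rw [hm0, hveq]
      simp only [Nat.choose_zero_right, Nat.cast_one, one_mul, pow_zero, mul_one, one_pow]
      have hWk : (Wf k k : ℝ) = ((k:ℝ)+1)^k := by
        rw [Wf]; simp only [Nat.sub_self, pow_zero, Nat.choose_self]; push_cast; ring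
      calc (Wf k (k/2) : ℝ)/((k:ℝ)+1)^k ≤ (Wf k k:ℝ)/((k:ℝ)+1)^k := by
            gcongr; exact_mod_cast Wmin k hk k le_rfl
      _ = 1 := by rw [hWk, div_self hDk.ne']
    · have h1v : 1 - v = (m:ℝ)/((k:ℝ)+1) := by
        rw [hvdef, eq_div_iff hD.ne', sub_mul, div_mul_cancel₀ _ hD.ne', hmr]; ring
      have h3 := E2 k m hm1 hmk
      rw [hkm] at h3
      have heq : (k.choose m:ℝ) * (v^i * (1-v)^m) = (Wf k (m-1):ℝ)/((k:ℝ)+1)^k := by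
        rw [h1v, hvdef, ← mul_assoc]
        exact h3
      rw [heq]
      gcongr
      exact_mod_cast Wmin k hk (m-1) (by omega)
  calc (Wf k (k/2) : ℝ)/((k:ℝ)+1)^k
      ≤ min ((k.choose m:ℝ) * (u^i * (1-u)^m)) ((k.choose m:ℝ) * (v^i * (1-v)^m)) :=
        le_min hVu hVv
  _ ≤ (k.choose m:ℝ) * min (u^i * (1-u)^m) (v^i * (1-v)^m) := by
      rcases min_cases (u^i * (1-u)^m) (v^i * (1-v)^m) with ⟨h,_⟩|⟨h,_⟩ <;> rw [h]
      · exact min_le_left _ _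
      · exact min_le_right _ _
  _ ≤ (k.choose m:ℝ) * (x^i * (1-x)^m) := mul_le_mul_of_nonneg_left hq hC
  _ = (k.choose m:ℝ) * x^i * (1-x)^m := (mul_assoc _ _ _).symm

/-- For every integer `k ≥ 1`, the infimum over `x ∈ [0,1]` of
`max_{0 ≤ m ≤ k} C(k,m) x^(k-m) (1-x)^m` equals
`C(k, ⌊k/2⌋) · (⌊(k+1)/2⌋⌈(k+1)/2⌉ / (⌊(k+1)/2⌋+⌈(k+1)/2⌉)²)^(k/2)`. -/
theorem stmt1 (k : ℕ) (hk : 1 ≤ k) :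
    IsGLB { y : ℝ | ∃ x ∈ Set.Icc (0 : ℝ) 1,
        y = (Finset.range (k + 1)).sup' Finset.nonempty_range_add_one
              (fun m => (k.choose m : ℝ) * x ^ (k - m) * (1 - x) ^ m) }
      ((k.choose (k / 2) : ℝ) *
        (((((k + 1) / 2 : ℕ) : ℝ) * (((k + 2) / 2 : ℕ) : ℝ)) /
            ((((k + 1) / 2 : ℕ) : ℝ) + (((k + 2) / 2 : ℕ) : ℝ)) ^ 2) ^ ((k : ℝ) / 2)) := by
  rw [hV k hk]
  have hD : (0:ℝ) < (k:ℝ)+1 := by positivity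
  have hDk : (0:ℝ) < ((k:ℝ)+1)^k := by positivity
  constructor
  · rintro y ⟨x, ⟨hx0, hx1⟩, rfl⟩
    obtain ⟨m, hm, hle⟩ := lower k hk hx0 hx1
    exact hle.trans (Finset.le_sup'
      (fun m => (k.choose m : ℝ) * x ^ (k - m) * (1 - x) ^ m)
      (Finset.mem_range.mpr (by omega)))
  · intro b hb
    apply hb
    refine ⟨((k - k/2 : ℕ):ℝ)/((k:ℝ)+1), ⟨by positivity, ?_⟩, ?_⟩
    · rw [div_le_one hD]
      have : ((k - k/2 : ℕ):ℝ) ≤ (k:ℝ) := by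
        exact_mod_cast Nat.sub_le k (k/2)
      linarith
    · -- V = sup'
      have hsub : 1 - ((k - k/2 : ℕ):ℝ)/((k:ℝ)+1) = (((k/2 : ℕ):ℝ)+1)/((k:ℝ)+1) := by
        rw [eq_div_iff hD.ne', sub_mul, div_mul_cancel₀ _ hD.ne']
        have h1 : ((k - k/2 : ℕ):ℝ) = (k:ℝ) - ((k/2:ℕ):ℝ) := by
          exact_mod_cast Nat.cast_sub (Nat.div_le_self k 2)
        rw [h1]; ring
      apply le_antisymm
      · -- V ≤ sup' : via term at k/2
        have ha : k/2 ∈ Finset.range (k+1) := Finset.mem_range.mpr (by omega)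
        refine le_trans ?_ (Finset.le_sup'
          (fun m => (k.choose m : ℝ) * (((k - k/2 : ℕ):ℝ)/((k:ℝ)+1)) ^ (k - m)
            * (1 - ((k - k/2 : ℕ):ℝ)/((k:ℝ)+1)) ^ m) ha)
        simp only [hsub]
        rw [term_eq k (k/2) (k/2) (Nat.div_le_self k 2)]
        rw [show Uf k (k/2) (k/2) = Wf k (k/2) from rfl]
      · -- sup' ≤ V
        apply Finset.sup'_le
        intro m hm
        have hmk : m ≤ k := by
          have := Finset.mem_range.mp hm; omega
        simp only [hsub]
        rw [term_eq k (k/2) m hmk]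
        gcongr
        exact_mod_cast Umax k (k/2) (Nat.div_le_self k 2) m hmk
end

section
/- For k odd, the infimum over x ∈ [0,1] of max_{0 ≤ m ≤ k} C(k,m)·x^(k−m)·(1−x)^m equals C(k,⌊k/2⌋)/2^k, attained at x = 1/2. -/
open Real

lemma gm_step (n : ℕ) (hn : 1 ≤ n) :
    (1 + 1/(n:ℝ))^n ≤ (1 + 1/((n:ℝ)+1))^(n+1) := by
  have hn' : (0:ℝ) < n := by exact_mod_cast hn
  have hn1 : (0:ℝ) < (n:ℝ) + 1 := by positivity
  set a : ℝ := 1 + 1/(n:ℝ) with ha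
  have ha0 : (0:ℝ) ≤ a := by positivity
  have key : a ^ ((n:ℝ)/((n:ℝ)+1)) ≤ 1 + 1/((n:ℝ)+1) := by
    have := Real.geom_mean_le_arith_mean2_weighted
      (w₁ := (n:ℝ)/((n:ℝ)+1)) (w₂ := 1/((n:ℝ)+1)) (p₁ := a) (p₂ := 1)
      (by positivity) (by positivity) ha0 zero_le_one (by field_simp)
    calc a ^ ((n:ℝ)/((n:ℝ)+1)) = a ^ ((n:ℝ)/((n:ℝ)+1)) * 1 ^ (1/((n:ℝ)+1)) := by
          rw [Real.one_rpow, mul_one]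
      _ ≤ (n:ℝ)/((n:ℝ)+1) * a + 1/((n:ℝ)+1) * 1 := this
      _ = 1 + 1/((n:ℝ)+1) := by field_simp [ha]; rw [ha, mul_add, mul_one_div_cancel hn'.ne']; ring
  have h2 : (a ^ ((n:ℝ)/((n:ℝ)+1))) ^ ((n:ℝ)+1) ≤ (1 + 1/((n:ℝ)+1)) ^ ((n:ℝ)+1) :=
    Real.rpow_le_rpow (Real.rpow_nonneg ha0 _) key (by positivity)
  rw [← Real.rpow_natCast a n, ← Real.rpow_natCast (1 + 1/((n:ℝ)+1)) (n+1)]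
  rw [← Real.rpow_mul ha0] at h2
  have : (n:ℝ)/((n:ℝ)+1) * ((n:ℝ)+1) = (n:ℝ) := by field_simp
  rw [this] at h2
  convert h2 using 2
  push_cast; ring

lemma gm_mono {i j : ℕ} (hi : 1 ≤ i) (hij : i ≤ j) :
    (1 + 1/(i:ℝ))^i ≤ (1 + 1/(j:ℝ))^j := by
  induction j with
  | zero => omega
  | succ n ih =>
    rcases Nat.lt_or_ge i (n+1) with h | h
    · have hn : 1 ≤ n := by omega
      calc (1 + 1/(i:ℝ))^i ≤ (1 + 1/(n:ℝ))^n := ih (by omega)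
        _ ≤ (1 + 1/((n:ℝ)+1))^(n+1) := gm_step n hn
        _ = (1 + 1/((n+1:ℕ):ℝ))^(n+1) := by push_cast; ring_nf
    · have : i = n + 1 := by omega
      subst this; exact le_refl _

lemma gm_cross {i j : ℕ} (hi : 1 ≤ i) (hij : i ≤ j) :
    ((i:ℝ)+1)^i * (j:ℝ)^j ≤ (i:ℝ)^i * ((j:ℝ)+1)^j := by
  have hi' : (0:ℝ) < i := by exact_mod_cast hi
  have hj' : (0:ℝ) < j := by exact_mod_cast (hi.trans hij)
  have h := gm_mono hi hij
  have e1 : ((i:ℝ)+1)^i = (1 + 1/(i:ℝ))^i * (i:ℝ)^i := by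
    rw [← mul_pow]; congr 1; field_simp
  have e2 : ((j:ℝ)+1)^j = (1 + 1/(j:ℝ))^j * (j:ℝ)^j := by
    rw [← mul_pow]; congr 1; field_simp
  rw [e1, e2]
  calc (1 + 1/(i:ℝ))^i * (i:ℝ)^i * (j:ℝ)^j
      ≤ (1 + 1/(j:ℝ))^j * (i:ℝ)^i * (j:ℝ)^j := by
        apply mul_le_mul_of_nonneg_right (mul_le_mul_of_nonneg_right h (by positivity)) (by positivity)
    _ = (i:ℝ)^i * ((1 + 1/(j:ℝ))^j * (j:ℝ)^j) := by ring

/-- `B k j x = C(k,j) x^j (1-x)^(k-j)`. -/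
noncomputable def Bt (k j : ℕ) (x : ℝ) : ℝ := (k.choose j : ℝ) * x^j * (1-x)^(k-j)

lemma Bt_at (k j : ℕ) (hj : j ≤ k) :
    Bt k j ((j:ℝ)/((k:ℝ)+1)) =
      (k.choose j : ℝ) * (j:ℝ)^j * ((k:ℝ)+1-(j:ℝ))^(k-j) / ((k:ℝ)+1)^k := by
  have hk1 : (0:ℝ) < (k:ℝ)+1 := by positivity
  have h1 : (1:ℝ) - (j:ℝ)/((k:ℝ)+1) = ((k:ℝ)+1-(j:ℝ))/((k:ℝ)+1) := by field_simp
  rw [Bt, h1, div_pow, div_pow]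
  have : (↑k + 1:ℝ) ^ k = (↑k+1:ℝ)^j * (↑k+1:ℝ)^(k-j) := by
    rw [← pow_add]; congr 1; omega
  rw [this]; field_simp

lemma N_step (k t j : ℕ) (hk : k = 2*t+1) (hj1 : t+1 ≤ j) (hjk : j < k) :
    (k.choose j : ℝ) * (j:ℝ)^j * ((k:ℝ)+1-(j:ℝ))^(k-j)
      ≤ (k.choose (j+1) : ℝ) * ((j:ℝ)+1)^(j+1) * ((k:ℝ)+1-((j:ℝ)+1))^(k-(j+1)) := by
  have hi1 : 1 ≤ k - j := by omega
  have hij : k - j ≤ j := by omega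
  set i := k - j with hidef
  have hiR : ((i:ℕ):ℝ) = (k:ℝ) - j := by
    rw [hidef]; push_cast [le_of_lt hjk]; ring
  have hipos : (0:ℝ) < i := by exact_mod_cast hi1
  have e1 : (k:ℝ)+1-(j:ℝ) = (i:ℝ)+1 := by rw [hiR]; ring
  have e2 : (k:ℝ)+1-((j:ℝ)+1) = (i:ℝ) := by rw [hiR]; ring
  have e3 : k - (j+1) = i - 1 := by omega
  rw [e1, e2, e3]
  have hch : (k.choose (j+1) : ℝ) * ((j:ℝ)+1) = (k.choose j : ℝ) * (i:ℝ) := by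
    have h := Nat.choose_succ_right_eq k j
    have h' : (k.choose (j+1)) * (j+1) = k.choose j * i := by rw [h]
    exact_mod_cast congrArg (Nat.cast (R := ℝ)) h'
  apply le_of_mul_le_mul_right _ hipos
  have hpow : ((i:ℝ))^(i-1) * (i:ℝ) = (i:ℝ)^i := by
    rw [← pow_succ]; congr 1; omega
  have hcross := gm_cross hi1 hij
  have hC1 : (0:ℝ) ≤ (k.choose (j+1):ℝ) * ((j:ℝ)+1) := by positivity
  calc (k.choose j:ℝ) * (j:ℝ)^j * ((i:ℝ)+1)^i * (i:ℝ)
      = ((k.choose (j+1):ℝ) * ((j:ℝ)+1)) * (((i:ℝ)+1)^i * (j:ℝ)^j) := by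
        rw [hch]; ring
    _ ≤ ((k.choose (j+1):ℝ) * ((j:ℝ)+1)) * ((i:ℝ)^i * ((j:ℝ)+1)^j) :=
        mul_le_mul_of_nonneg_left hcross hC1
    _ = (k.choose (j+1):ℝ) * ((j:ℝ)+1)^(j+1) * (i:ℝ)^(i-1) * (i:ℝ) := by
        rw [← hpow]; ring

lemma Hbound (k t : ℕ) (hk : k = 2*t+1) : ∀ j, t+1 ≤ j → j ≤ k →
    (k.choose (k/2) : ℝ)/2^k ≤ Bt k j ((j:ℝ)/((k:ℝ)+1)) := by
  intro j hj1
  induction j, hj1 using Nat.le_induction with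
  | base =>
    intro _
    have hx : (((t+1:ℕ)):ℝ)/((k:ℝ)+1) = 1/2 := by
      subst hk; push_cast; rw [div_eq_div_iff (by positivity) (by norm_num)]; ring
    have h2 : k / 2 = t := by omega
    have hcs : k.choose (t+1) = k.choose t := by
      have h := Nat.choose_symm (show t+1 ≤ k by omega)
      rw [show k - (t+1) = t by omega] at h; exact h.symm
    rw [hx, Bt, hcs, h2]
    norm_num
    rw [mul_assoc, ← pow_add, show t+1 + (k-(t+1)) = k by omega]
    rw [div_pow, one_pow, mul_one_div]
  | succ n hn ih =>
    intro hnk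
    have h1 := ih (by omega)
    rw [Bt_at k n (by omega)] at h1
    rw [Bt_at k (n+1) hnk]
    refine h1.trans ?_
    apply div_le_div_of_nonneg_right ?_ (by positivity)
    have := N_step k t n hk hn (by omega)
    push_cast
    push_cast at this
    convert this using 2 <;> ring

lemma Bt_switch (k j : ℕ) (hj : j < k) :
    Bt k j (((j:ℝ)+1)/((k:ℝ)+1)) = Bt k (j+1) (((j:ℝ)+1)/((k:ℝ)+1)) := by
  have hk1 : (0:ℝ) < (k:ℝ)+1 := by positivity
  set a : ℝ := ((j:ℝ)+1)/((k:ℝ)+1) with hadef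
  have h1a : (1:ℝ) - a = ((k:ℝ)-(j:ℝ))/((k:ℝ)+1) := by rw [hadef]; field_simp; ring
  have hch : (k.choose j : ℝ) * (1 - a) = (k.choose (j+1) : ℝ) * a := by
    have h := Nat.choose_succ_right_eq k j
    have h' : ((k.choose (j+1) * (j+1) : ℕ) : ℝ) = ((k.choose j * (k - j) : ℕ) : ℝ) := by rw [h]
    push_cast [le_of_lt hj] at h'
    rw [h1a, hadef]
    field_simp
    linarith [h']
  have hkj : k - j = (k - (j+1)) + 1 := by omega
  rw [Bt, Bt, hkj, pow_succ]
  calc (k.choose j : ℝ) * a ^ j * ((1-a)^(k-(j+1)) * (1-a))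
      = ((k.choose j : ℝ) * (1-a)) * a ^ j * (1-a)^(k-(j+1)) := by ring
    _ = ((k.choose (j+1) : ℝ) * a) * a ^ j * (1-a)^(k-(j+1)) := by rw [hch]
    _ = (k.choose (j+1) : ℝ) * a ^ (j+1) * (1-a)^(k-(j+1)) := by rw [pow_succ]; ring

lemma interp (C c : ℝ) (hC : 0 < C) (hc : 0 ≤ c) (j n : ℕ) (a b x : ℝ)
    (ha0 : 0 ≤ a) (hb1 : b ≤ 1) (hax : a ≤ x) (hxb : x ≤ b)
    (hA : c ≤ C * a^j * (1-a)^n) (hB : c ≤ C * b^j * (1-b)^n) :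
    c ≤ C * x^j * (1-x)^n := by
  rcases eq_or_lt_of_le (hax.trans hxb) with h | hab
  · have : x = a := le_antisymm (h ▸ hxb) hax
    rw [this]; exact hA
  · set l : ℝ := (b-x)/(b-a) with hl
    set m : ℝ := (x-a)/(b-a) with hm
    have hba : (0:ℝ) < b - a := by linarith
    have hl0 : 0 ≤ l := by apply div_nonneg <;> linarith
    have hm0 : 0 ≤ m := by apply div_nonneg <;> linarith
    have hlm : l + m = 1 := by rw [hl, hm]; field_simp; ring
    have hb0 : 0 ≤ b := le_trans (ha0.trans hax) hxb
    have hx0 : 0 ≤ x := ha0.trans hax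
    have h1a : 0 ≤ 1 - a := by linarith [hxb.trans hb1]
    have h1b : 0 ≤ 1 - b := by linarith
    have h1x : 0 ≤ 1 - x := by linarith [hxb.trans hb1]
    have h1 : a ^ l * b ^ m ≤ x := by
      have := Real.geom_mean_le_arith_mean2_weighted hl0 hm0 ha0 hb0 hlm
      refine this.trans (le_of_eq ?_)
      rw [hl, hm]; field_simp; ring
    have h2 : (1-a) ^ l * (1-b) ^ m ≤ 1 - x := by
      have := Real.geom_mean_le_arith_mean2_weighted hl0 hm0 h1a h1b hlm
      refine this.trans (le_of_eq ?_)
      rw [hl, hm]; field_simp; ring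
    have key : (C * a^j * (1-a)^n)^l * (C * b^j * (1-b)^n)^m ≤ C * x^j * (1-x)^n := by
      have e : (C * a^j * (1-a)^n)^l * (C * b^j * (1-b)^n)^m
          = C * ((a^l * b^m)^j) * (((1-a)^l * (1-b)^m)^n) := by
        rw [Real.mul_rpow (by positivity) (by positivity),
            Real.mul_rpow (by positivity) (by positivity),
            Real.mul_rpow (by positivity) (by positivity),
            Real.mul_rpow (by positivity) (by positivity),
            mul_pow, mul_pow,
            ← Real.rpow_natCast a j, ← Real.rpow_natCast b j,
            ← Real.rpow_natCast (1-a) n, ← Real.rpow_natCast (1-b) n,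
            ← Real.rpow_natCast (a^l) j, ← Real.rpow_natCast (b^m) j,
            ← Real.rpow_natCast ((1-a)^l) n, ← Real.rpow_natCast ((1-b)^m) n,
            ← Real.rpow_mul ha0, ← Real.rpow_mul hb0,
            ← Real.rpow_mul h1a, ← Real.rpow_mul h1b,
            ← Real.rpow_mul ha0, ← Real.rpow_mul hb0,
            ← Real.rpow_mul h1a, ← Real.rpow_mul h1b,
            mul_comm ((j:ℝ)) l, mul_comm ((j:ℝ)) m, mul_comm ((n:ℝ)) l, mul_comm ((n:ℝ)) m]
        have hCC : C ^ l * C ^ m = C := by rw [← Real.rpow_add hC, hlm, Real.rpow_one]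
        linear_combination (a ^ (l*(j:ℝ)) * (1-a)^(l*(n:ℝ)) * b^(m*(j:ℝ)) * (1-b)^(m*(n:ℝ))) * hCC
      rw [e]
      have t1 : (a^l * b^m)^j ≤ x^j := by
        apply pow_le_pow_left₀ (by positivity) h1
      have t2 : ((1-a)^l * (1-b)^m)^n ≤ (1-x)^n := by
        apply pow_le_pow_left₀ (by positivity) h2
      calc C * ((a^l * b^m)^j) * (((1-a)^l * (1-b)^m)^n)
          ≤ C * (x^j) * (((1-a)^l * (1-b)^m)^n) := by
            apply mul_le_mul_of_nonneg_right (mul_le_mul_of_nonneg_left t1 hC.le) (by positivity)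
        _ ≤ C * (x^j) * ((1-x)^n) := by
            apply mul_le_mul_of_nonneg_left t2 (by positivity)
    refine le_trans ?_ key
    calc c = c ^ l * c ^ m := by
          rw [← Real.rpow_add' hc (by rw [hlm]; norm_num)]
          rw [hlm, Real.rpow_one]
      _ ≤ (C * a^j * (1-a)^n)^l * (C * b^j * (1-b)^n)^m := by
          apply mul_le_mul (Real.rpow_le_rpow hc hA hl0) (Real.rpow_le_rpow hc hB hm0)
            (Real.rpow_nonneg hc m) (Real.rpow_nonneg (by positivity) l)

lemma choose_mid_le (k t : ℕ) (hk : k = 2*t+1) : k.choose (k/2) ≤ 2^k := by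
  have h1 : (2*t+1).choose t ≤ 4^t := Nat.choose_middle_le_pow t
  calc k.choose (k/2) = (2*t+1).choose t := by rw [hk]; congr 1; omega
    _ ≤ 4^t := h1
    _ = 2^(2*t) := by rw [pow_mul]; norm_num
    _ ≤ 2^k := Nat.pow_le_pow_right (by norm_num) (by omega)

lemma lemA (k t : ℕ) (hk : k = 2*t+1) {x : ℝ} (hx1 : 1/2 ≤ x) (hx2 : x ≤ 1) :
    ∃ j, j ≤ k ∧ (k.choose (k/2) : ℝ)/2^k ≤ (k.choose j : ℝ) * x^j * (1-x)^(k-j) := by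
  set c : ℝ := (k.choose (k/2) : ℝ)/2^k with hcdef
  have hc0 : (0:ℝ) ≤ c := by positivity
  set j := min (Nat.floor (((k:ℝ)+1)*x)) k with hjdef
  have hjk : j ≤ k := min_le_right _ _
  refine ⟨j, hjk, ?_⟩
  have hk1 : (0:ℝ) < (k:ℝ)+1 := by positivity
  have hxpos : (0:ℝ) ≤ ((k:ℝ)+1)*x := by positivity
  have hjt : t+1 ≤ j := by
    have h1 : t+1 ≤ Nat.floor (((k:ℝ)+1)*x) := by
      apply Nat.le_floor
      push_cast [hk]
      nlinarith
    exact le_min h1 (by omega)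
  have ha_le : ((j:ℝ))/((k:ℝ)+1) ≤ x := by
    rw [div_le_iff₀ hk1]
    have h2 : (j:ℝ) ≤ (Nat.floor (((k:ℝ)+1)*x) : ℝ) := Nat.cast_le.mpr (min_le_left _ _)
    calc (j:ℝ) ≤ _ := h2
      _ ≤ ((k:ℝ)+1)*x := Nat.floor_le hxpos
      _ = x * ((k:ℝ)+1) := by ring
  have hx_le : x ≤ ((j:ℝ)+1)/((k:ℝ)+1) := by
    rcases Nat.lt_or_ge (Nat.floor (((k:ℝ)+1)*x)) k with h | h
    · have hj_eq : j = Nat.floor (((k:ℝ)+1)*x) := min_eq_left (le_of_lt h)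
      rw [le_div_iff₀ hk1, hj_eq]
      have h3 := Nat.lt_floor_add_one (((k:ℝ)+1)*x)
      nlinarith
    · have hj_eq : j = k := min_eq_right h
      rw [hj_eq, le_div_iff₀ hk1]; nlinarith
  have hb1 : ((j:ℝ)+1)/((k:ℝ)+1) ≤ 1 := by
    rw [div_le_one hk1]
    have : (j:ℝ) ≤ (k:ℝ) := by exact_mod_cast hjk
    linarith
  have hA : c ≤ Bt k j ((j:ℝ)/((k:ℝ)+1)) := Hbound k t hk j hjt hjk
  have hB : c ≤ Bt k j (((j:ℝ)+1)/((k:ℝ)+1)) := by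
    rcases Nat.lt_or_ge j k with h | h
    · rw [Bt_switch k j h]
      have h4 := Hbound k t hk (j+1) (by omega) h
      convert h4 using 2
      push_cast; ring
    · have hj_eq : j = k := le_antisymm hjk h
      have h5 : ((k:ℝ)+1)/((k:ℝ)+1) = 1 := div_self hk1.ne'
      rw [hj_eq, h5, Bt]
      simp only [Nat.choose_self, Nat.sub_self, pow_zero, Nat.cast_one, one_mul, mul_one,
        one_pow, sub_self]
      rw [hcdef, div_le_one (by positivity)]
      exact_mod_cast choose_mid_le k t hk
  have hcp : (0:ℝ) < (k.choose j : ℝ) := by exact_mod_cast Nat.choose_pos hjk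
  have := interp (k.choose j : ℝ) c hcp hc0 j (k-j)
    ((j:ℝ)/((k:ℝ)+1)) (((j:ℝ)+1)/((k:ℝ)+1)) x
    (by positivity) hb1 ha_le hx_le hA hB
  exact this

/-- For `k` odd, the infimum over `x ∈ [0,1]` of
`max_{0 ≤ m ≤ k} C(k,m) x^(k-m) (1-x)^m` equals `C(k,⌊k/2⌋)/2^k`, attained at `x = 1/2`. -/
theorem stmt2 (k : ℕ) (hk : Odd k) :
    IsGLB { y : ℝ | ∃ x ∈ Set.Icc (0 : ℝ) 1,
        y = (Finset.range (k + 1)).sup' Finset.nonempty_range_add_one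
              (fun m => (k.choose m : ℝ) * x ^ (k - m) * (1 - x) ^ m) }
      ((k.choose (k / 2) : ℝ) / 2 ^ k) ∧
    (Finset.range (k + 1)).sup' Finset.nonempty_range_add_one
        (fun m => (k.choose m : ℝ) * (1 / 2 : ℝ) ^ (k - m) * (1 - (1 / 2 : ℝ)) ^ m)
      = (k.choose (k / 2) : ℝ) / 2 ^ k := by
  obtain ⟨t, ht⟩ := hk
  have ht' : k = 2*t+1 := by omega
  have hhalf : (1 : ℝ) - 1/2 = 1/2 := by norm_num
  have hval : (Finset.range (k + 1)).sup' Finset.nonempty_range_add_one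
        (fun m => (k.choose m : ℝ) * (1 / 2 : ℝ) ^ (k - m) * (1 - (1 / 2 : ℝ)) ^ m)
      = (k.choose (k / 2) : ℝ) / 2 ^ k := by
    apply le_antisymm
    · apply Finset.sup'_le
      intro m hm
      have hm' : m ≤ k := by
        have := Finset.mem_range.mp hm; omega
      rw [hhalf]
      calc (k.choose m : ℝ) * (1/2:ℝ)^(k-m) * (1/2:ℝ)^m
          = (k.choose m : ℝ) * (1/2:ℝ)^k := by
            rw [mul_assoc, ← pow_add, show k-m+m = k by omega]
        _ ≤ (k.choose (k/2) : ℝ) * (1/2:ℝ)^k := by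
            have : (k.choose m : ℝ) ≤ (k.choose (k/2) : ℝ) := by
              exact_mod_cast Nat.choose_le_middle m k
            apply mul_le_mul_of_nonneg_right this (by positivity)
        _ = (k.choose (k/2) : ℝ) / 2^k := by
            rw [div_pow, one_pow, mul_one_div]
    · have hmem : k/2 ∈ Finset.range (k+1) := Finset.mem_range.mpr (by omega)
      refine le_trans (le_of_eq ?_) (Finset.le_sup'
        (fun m => (k.choose m : ℝ) * (1 / 2 : ℝ) ^ (k - m) * (1 - (1 / 2 : ℝ)) ^ m) hmem)
      rw [hhalf]
      rw [mul_assoc, ← pow_add, show k - k/2 + k/2 = k by omega, div_pow, one_pow, mul_one_div]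
  refine ⟨⟨?_, ?_⟩, hval⟩
  · rintro y ⟨x, ⟨hx0, hx1⟩, rfl⟩
    rcases le_or_gt (1/2 : ℝ) x with h | h
    · obtain ⟨j, hj, hle⟩ := lemA k t ht' h hx1
      have hmem : k - j ∈ Finset.range (k+1) := Finset.mem_range.mpr (by omega)
      refine hle.trans (le_trans (le_of_eq ?_)
        (Finset.le_sup' (fun m => (k.choose m : ℝ) * x ^ (k - m) * (1 - x) ^ m) hmem))
      rw [Nat.choose_symm hj, show k-(k-j) = j by omega]
    · obtain ⟨j, hj, hle⟩ := lemA k t ht' (x := 1 - x) (by linarith) (by linarith)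
      rw [show (1:ℝ) - (1-x) = x by ring] at hle
      have hmem : j ∈ Finset.range (k+1) := Finset.mem_range.mpr (by omega)
      refine hle.trans (le_trans (le_of_eq ?_)
        (Finset.le_sup' (fun m => (k.choose m : ℝ) * x ^ (k - m) * (1 - x) ^ m) hmem))
      ring
  · intro b hb
    exact hb ⟨1/2, ⟨by norm_num, by norm_num⟩, hval.symm⟩
end

section
/- For every integer k ≥ 1 and 0 ≤ i ≤ k/2, one has ((k−i)/(k−i+1))^(k−i) ≤ (i/(i+1))^i; equivalently, g_{k,i}((k−i)/(k+1)) ≤ g_{k,i}((k+1−i)/(k+1)) where g_{k,i}(x) = x^(k−i)(1−x)^i. -/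
lemma step (n : ℕ) : (((n:ℝ)+1)/((n:ℝ)+2))^(n+1) ≤ ((n:ℝ)/((n:ℝ)+1))^n := by
  set x : ℝ := (n : ℝ) with hx
  have hx0 : 0 ≤ x := Nat.cast_nonneg n
  have h1 : (0:ℝ) < x+1 := by positivity
  have h2 : (0:ℝ) < x+2 := by positivity
  have hber := one_add_mul_le_pow (a := -(1/(x+1)^2)) (by
    have h4 : 1/(x+1)^2 ≤ 1 := by rw [div_le_one (by positivity)]; nlinarith
    linarith) n
  have heq : (1 : ℝ) + -(1/(x+1)^2) = (x/(x+1)) * ((x+2)/(x+1)) := by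
    field_simp; ring
  rw [heq, mul_pow] at hber
  have h3 : (1:ℝ) ≤ (1 + (n:ℝ) * -(1/(x+1)^2)) * ((x+2)/(x+1)) := by
    rw [show (1 + (n:ℝ) * -(1/(x+1)^2)) = ((x+1)^2 - x)/(x+1)^2 by rw [← hx]; field_simp; ring]
    rw [div_mul_div_comm, le_div_iff₀ (by positivity)]
    nlinarith
  have hkey : 1 ≤ (x/(x+1))^n * ((x+2)/(x+1))^(n+1) := by
    calc (1:ℝ) ≤ (1 + (n:ℝ) * -(1/(x+1)^2)) * ((x+2)/(x+1)) := h3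
    _ ≤ ((x/(x+1))^n * ((x+2)/(x+1))^n) * ((x+2)/(x+1)) :=
        mul_le_mul_of_nonneg_right hber (by positivity)
    _ = (x/(x+1))^n * ((x+2)/(x+1))^(n+1) := by ring
  have hc : (0:ℝ) < ((x+2)/(x+1))^(n+1) := by positivity
  have hinv : ((x+1)/(x+2))^(n+1) = 1 / ((x+2)/(x+1))^(n+1) := by
    rw [one_div, ← inv_pow, inv_div]
  rw [hinv, div_le_iff₀ hc]
  nlinarith [hkey]

lemma anti {m n : ℕ} (h : m ≤ n) : ((n:ℝ)/((n:ℝ)+1))^n ≤ ((m:ℝ)/((m:ℝ)+1))^m := by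
  induction n, h using Nat.le_induction with
  | base => exact le_refl _
  | succ n hmn ih =>
      refine le_trans ?_ ih
      have := step n
      push_cast
      convert this using 3 <;> push_cast <;> first | rfl | ring

/-- For `k ≥ 1` and `0 ≤ i ≤ k/2`,
`((k-i)/(k-i+1))^(k-i) ≤ (i/(i+1))^i`; equivalently
`g_{k,i}((k-i)/(k+1)) ≤ g_{k,i}((k+1-i)/(k+1))` where `g_{k,i}(x) = x^(k-i)(1-x)^i`. -/
theorem stmt5 (k i : ℕ) (hk : 1 ≤ k) (hi : 2 * i ≤ k) :
    (((k : ℝ) - i) / ((k : ℝ) - i + 1)) ^ (k - i) ≤ ((i : ℝ) / ((i : ℝ) + 1)) ^ i ∧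
    (((k : ℝ) - i) / ((k : ℝ) + 1)) ^ (k - i) * (1 - ((k : ℝ) - i) / ((k : ℝ) + 1)) ^ i ≤
      (((k : ℝ) + 1 - i) / ((k : ℝ) + 1)) ^ (k - i) *
        (1 - ((k : ℝ) + 1 - i) / ((k : ℝ) + 1)) ^ i := by
  have hik : i ≤ k := by omega
  set n := k - i with hn
  have hkn : (k:ℝ) - i = (n:ℝ) := by
    rw [hn, Nat.cast_sub hik]
  have hin : i ≤ n := by omega
  have part1 : (((k : ℝ) - i) / ((k : ℝ) - i + 1)) ^ n ≤ ((i : ℝ) / ((i : ℝ) + 1)) ^ i := by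
    rw [hkn]; exact anti hin
  refine ⟨part1, ?_⟩
  have hK : (0:ℝ) < (k:ℝ) + 1 := by positivity
  have cross : ((n:ℝ))^n * ((i:ℝ)+1)^i ≤ ((i:ℝ))^i * ((n:ℝ)+1)^n := by
    have h := part1
    rw [hkn, div_pow, div_pow, div_le_div_iff₀ (by positivity) (by positivity)] at h
    exact h
  have e1 : 1 - ((k:ℝ)-i)/((k:ℝ)+1) = ((i:ℝ)+1)/((k:ℝ)+1) := by
    field_simp; try ring
  have e2 : 1 - ((k:ℝ)+1-i)/((k:ℝ)+1) = ((i:ℝ))/((k:ℝ)+1) := by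
    field_simp; try ring
  have e3 : (k:ℝ)+1-(i:ℝ) = (n:ℝ)+1 := by rw [← hkn]; ring
  rw [e1, e2, e3, hkn, div_pow, div_pow, div_pow, div_pow, div_mul_div_comm,
    div_mul_div_comm]
  gcongr ?_ / ?_
  · nlinarith [cross]
end

section
/- Poisson binomial probabilities are ultra log-concave: if X₁,…,X_k are independent Bernoulli variables with parameters p₁,…,p_k ∈ [0,1] and f_{k,i} = P(X₁+⋯+X_k = i), then for 1 ≤ i ≤ k−1, f_{k,i}² ≥ ((i+1)/i)·((k−i+1)/(k−i))·f_{k,i−1}·f_{k,i+1}. -/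
/-- The Poisson binomial probability `f_{k,i}(p) = P(X₁+⋯+X_k = i)` for independent
Bernoulli variables with parameters `p₁,…,p_k`: the coefficient of `z^i` in
`∏ⱼ ((1-pⱼ) + pⱼ z)`. -/
def poissonBinomial (k : ℕ) (p : Fin k → ℝ) (i : ℕ) : ℝ :=
  ∑ S ∈ Finset.powersetCard i (Finset.univ : Finset (Fin k)),
    (∏ j ∈ S, p j) * ∏ j ∈ Sᶜ, (1 - p j)



open Finset

variable {ι : Type*} [DecidableEq ι]

def pbAux (s : Finset ι) (p : ι → ℝ) (i : ℕ) : ℝ :=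
  ∑ t ∈ Finset.powersetCard i s, (∏ j ∈ t, p j) * ∏ j ∈ s \ t, (1 - p j)

lemma pbAux_of_card_lt {s : Finset ι} {p : ι → ℝ} {i : ℕ} (h : s.card < i) :
    pbAux s p i = 0 := by
  rw [pbAux, Finset.powersetCard_eq_empty.2 h, Finset.sum_empty]

lemma pbAux_insert_zero {s : Finset ι} {a : ι} (ha : a ∉ s) (p : ι → ℝ) :
    pbAux (insert a s) p 0 = (1 - p a) * pbAux s p 0 := by
  simp only [pbAux, Finset.powersetCard_zero, Finset.sum_singleton, Finset.prod_empty,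
    Finset.sdiff_empty, one_mul, Finset.mul_sum]
  rw [Finset.prod_insert ha]

lemma pbAux_insert {s : Finset ι} {a : ι} (ha : a ∉ s) (p : ι → ℝ) (i : ℕ) :
    pbAux (insert a s) p (i + 1)
      = (1 - p a) * pbAux s p (i + 1) + p a * pbAux s p i := by
  rw [pbAux, Finset.powersetCard_succ_insert ha]
  rw [Finset.sum_union]
  · congr 1
    · rw [pbAux, Finset.mul_sum]
      apply Finset.sum_congr rfl
      intro t ht
      rw [Finset.mem_powersetCard] at ht
      have hat : a ∉ t := fun h => ha (ht.1 h)
      have h1 : insert a s \ t = insert a (s \ t) := by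
        rw [Finset.insert_sdiff_of_notMem _ hat]
      rw [h1, Finset.prod_insert (by simp [ha])]
      ring
    · rw [Finset.sum_image, pbAux, Finset.mul_sum]
      · apply Finset.sum_congr rfl
        intro t ht
        rw [Finset.mem_powersetCard] at ht
        have hat : a ∉ t := fun h => ha (ht.1 h)
        have h1 : insert a s \ insert a t = s \ t := by
          ext x
          simp only [Finset.mem_sdiff, Finset.mem_insert]
          constructor
          · rintro ⟨hx1 | hx1, hx2⟩
            · exact absurd (Or.inl hx1) hx2
            · exact ⟨hx1, fun h => hx2 (Or.inr h)⟩
          · rintro ⟨hx1, hx2⟩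
            exact ⟨Or.inr hx1, fun h => h.elim (fun h' => ha (h' ▸ hx1)) hx2⟩
        rw [h1, Finset.prod_insert hat]
        ring
      · intro t ht u hu htu
        rw [Finset.mem_coe, Finset.mem_powersetCard] at ht hu
        have : ∀ v : Finset ι, v ⊆ s → (insert a v).erase a = v := by
          intro v hv
          rw [Finset.erase_insert (fun h => ha (hv h))]
        rw [← this t ht.1, ← this u hu.1, htu]
  · rw [Finset.disjoint_left]
    intro t ht ht'
    rw [Finset.mem_powersetCard] at ht
    rw [Finset.mem_image] at ht'
    obtain ⟨u, _, rfl⟩ := ht'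
    exact ha (ht.1 (Finset.mem_insert_self a u))

lemma pbAux_nonneg {s : Finset ι} {p : ι → ℝ} (hp : ∀ j ∈ s, p j ∈ Set.Icc (0:ℝ) 1)
    (i : ℕ) : 0 ≤ pbAux s p i := by
  apply Finset.sum_nonneg
  intro t ht
  rw [Finset.mem_powersetCard] at ht
  apply mul_nonneg
  · exact Finset.prod_nonneg fun j hj => (hp j (ht.1 hj)).1
  · exact Finset.prod_nonneg fun j hj => by
      have := (hp j (Finset.mem_sdiff.1 hj).1).2; linarith

lemma pbAux_empty (p : ι → ℝ) : pbAux (∅ : Finset ι) p 0 = 1 := by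
  simp [pbAux]

lemma pbAux_pos {p : ι → ℝ} (s : Finset ι) (hp : ∀ j ∈ s, p j ∈ Set.Ioo (0:ℝ) 1) :
    ∀ i ≤ s.card, 0 < pbAux s p i := by
  induction s using Finset.induction_on with
  | empty =>
    intro i hi
    have h0 : i = 0 := by simpa using hi
    rw [h0, pbAux_empty]
    norm_num
  | @insert a s ha IH =>
    have hpa := hp a (Finset.mem_insert_self a s)
    have hps : ∀ j ∈ s, p j ∈ Set.Ioo (0:ℝ) 1 := fun j hj => hp j (Finset.mem_insert_of_mem hj)
    have hq : 0 < 1 - p a := by have := hpa.2; linarith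
    intro i hi
    rw [Finset.card_insert_of_notMem ha] at hi
    match i, hi with
    | 0, _ =>
      rw [pbAux_insert_zero ha]
      exact mul_pos hq (IH hps 0 (Nat.zero_le _))
    | (m+1), hi =>
      rw [pbAux_insert ha]
      have hm : m ≤ s.card := by omega
      have h1 : 0 < p a * pbAux s p m := mul_pos hpa.1 (IH hps m hm)
      have h2 : 0 ≤ (1 - p a) * pbAux s p (m+1) := by
        rcases le_or_gt (m+1) s.card with h | h
        · exact le_of_lt (mul_pos hq (IH hps (m+1) h))
        · rw [pbAux_of_card_lt h, mul_zero]
      linarith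

/-- normalized sequence: `pbAux * i! * (card - i)!` -/
noncomputable def pbH (s : Finset ι) (p : ι → ℝ) (i : ℕ) : ℝ :=
  pbAux s p i * (Nat.factorial i : ℝ) * (Nat.factorial (s.card - i) : ℝ)

lemma pbH_pos {p : ι → ℝ} {s : Finset ι} (hp : ∀ j ∈ s, p j ∈ Set.Ioo (0:ℝ) 1)
    {i : ℕ} (hi : i ≤ s.card) : 0 < pbH s p i := by
  apply mul_pos (mul_pos (pbAux_pos s hp i hi) _) _ <;> exact_mod_cast Nat.factorial_pos _

lemma pbH_nonneg {p : ι → ℝ} {s : Finset ι} (hp : ∀ j ∈ s, p j ∈ Set.Ioo (0:ℝ) 1)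
    (i : ℕ) : 0 ≤ pbH s p i := by
  rcases le_or_gt i s.card with h | h
  · exact le_of_lt (pbH_pos hp h)
  · rw [pbH, pbAux_of_card_lt h, zero_mul, zero_mul]

lemma pbH_step {p : ι → ℝ} {s : Finset ι} {a : ι} (ha : a ∉ s) {j : ℕ}
    (hj : j ≤ s.card + 1) :
    pbH (insert a s) p j
      = (1 - p a) * ((s.card + 1 : ℝ) - j) * pbH s p j
        + p a * (j : ℝ) * pbH s p (j - 1) := by
  have hcard : (insert a s).card = s.card + 1 := Finset.card_insert_of_notMem ha
  match j, hj with
  | 0, _ =>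
    simp only [pbH, pbAux_insert_zero ha, hcard, Nat.cast_zero, Nat.sub_zero, mul_zero,
      zero_mul, add_zero, Nat.factorial_succ]
    push_cast
    ring
  | (m+1), hj =>
    have hm : m ≤ s.card := by omega
    rcases eq_or_lt_of_le hm with hmn | hmn
    · have h0 : pbAux s p (m+1) = 0 := pbAux_of_card_lt (by omega)
      simp only [pbH, pbAux_insert ha, hcard, h0, ← hmn, Nat.sub_self, Nat.add_sub_cancel,
        Nat.add_sub_cancel_left, Nat.factorial_succ]
      have : m - (m+1) = 0 := by omega
      rw [this]
      push_cast
      ring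
    · obtain ⟨b, hb⟩ : ∃ b, s.card = b + (m+1) := ⟨s.card - (m+1), by omega⟩
      simp only [pbH, pbAux_insert ha, hcard, hb, Nat.add_sub_cancel]
      have e3 : b + (m+1) - m = b + 1 := by omega
      rw [e3, show b + (m+1) + 1 - (m+1) = b + 1 from by omega]
      push_cast [Nat.factorial_succ]
      ring

lemma key (p q c e x y z w : ℝ) (hp : 0 ≤ p) (hq : 0 ≤ q) (hc : 1 ≤ c) (he : 1 ≤ e)
    (hx : 0 < x) (hy : 0 < y) (hz : 0 ≤ z) (hw : 0 ≤ w)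
    (hxz : x * z ≤ y ^ 2) (hwy : w * y ≤ x ^ 2) :
    (q * (e + 1) * x + p * (c - 1) * w) * (q * (e - 1) * z + p * (c + 1) * y)
      ≤ (q * e * y + p * c * x) ^ 2 := by
  have hwz : w * z ≤ x * y := by
    nlinarith [mul_pos hx hy, mul_nonneg hw hz, sq_nonneg (x*y - w*z)]
  have hc1 : (0:ℝ) ≤ c - 1 := by linarith
  have he1 : (0:ℝ) ≤ e - 1 := by linarith
  have h1 : 0 ≤ q*q*((e-1)*(e+1))*(y^2 - x*z) := by
    apply mul_nonneg
    · apply mul_nonneg (mul_nonneg hq hq)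
      apply mul_nonneg he1; linarith
    · linarith
  have h2 : 0 ≤ p*p*((c-1)*(c+1))*(x^2 - w*y) := by
    apply mul_nonneg
    · apply mul_nonneg (mul_nonneg hp hp)
      apply mul_nonneg hc1; linarith
    · linarith
  have h3 : 0 ≤ p*q*((c-1)*(e-1))*(x*y - w*z) := by
    apply mul_nonneg
    · exact mul_nonneg (mul_nonneg hp hq) (mul_nonneg hc1 he1)
    · linarith
  nlinarith [sq_nonneg (q*y - p*x), h1, h2, h3]

theorem pbH_ulc {p : ι → ℝ} (s : Finset ι) (hp : ∀ j ∈ s, p j ∈ Set.Ioo (0:ℝ) 1) :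
    ∀ i : ℕ, 1 ≤ i → pbH s p (i-1) * pbH s p (i+1) ≤ pbH s p i ^ 2 := by
  induction s using Finset.induction_on with
  | empty =>
    intro i hi
    have h0 : pbH (∅ : Finset ι) p (i+1) = 0 := by
      rw [pbH, pbAux_of_card_lt (by simp), zero_mul, zero_mul]
    rw [h0, mul_zero]
    exact sq_nonneg _
  | @insert a s ha IH =>
    have hpa := hp a (Finset.mem_insert_self a s)
    have hps : ∀ j ∈ s, p j ∈ Set.Ioo (0:ℝ) 1 := fun j hj => hp j (Finset.mem_insert_of_mem hj)
    have hcard : (insert a s).card = s.card + 1 := Finset.card_insert_of_notMem ha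
    intro i hi
    rcases lt_or_ge s.card i with hgt | hle
    · have h0 : pbH (insert a s) p (i+1) = 0 := by
        rw [pbH, pbAux_of_card_lt (by omega), zero_mul, zero_mul]
      rw [h0, mul_zero]
      exact sq_nonneg _
    · rw [pbH_step ha (by omega : i - 1 ≤ s.card + 1),
        pbH_step ha (by omega : i ≤ s.card + 1),
        pbH_step ha (by omega : i + 1 ≤ s.card + 1)]
      rw [Nat.cast_sub hi, Nat.add_sub_cancel]
      have hq0 : 0 ≤ 1 - p a := by have := hpa.2; linarith
      have hp0 : 0 ≤ p a := le_of_lt hpa.1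
      have hx : 0 < pbH s p (i-1) := pbH_pos hps (by omega)
      have hy : 0 < pbH s p i := pbH_pos hps hle
      have hz : 0 ≤ pbH s p (i+1) := pbH_nonneg hps _
      have hxz : pbH s p (i-1) * pbH s p (i+1) ≤ pbH s p i ^ 2 := IH hps i hi
      have hc : (1:ℝ) ≤ (i:ℝ) := by exact_mod_cast hi
      have he : (1:ℝ) ≤ ((s.card:ℝ) + 1) - (i:ℝ) := by
        have : (i:ℝ) ≤ (s.card:ℝ) := by exact_mod_cast hle
        linarith
      rcases eq_or_lt_of_le hi with h1 | h2
      · -- i = 1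
        subst h1
        have hxz' : pbH s p 0 * pbH s p 2 ≤ pbH s p 1 ^ 2 := hxz
        have hx' : 0 < pbH s p 0 := hx
        have hy' : 0 < pbH s p 1 := hy
        have hz' : 0 ≤ pbH s p 2 := hz
        have he' : (1:ℝ) ≤ ((s.card:ℝ) + 1) - 1 := by
          have : (1:ℝ) ≤ (s.card:ℝ) := by exact_mod_cast hle
          linarith
        have H := key (p a) (1 - p a) 1 ((s.card:ℝ) + 1 - 1)
          (pbH s p 0) (pbH s p 1) (pbH s p 2) 0
          hp0 hq0 le_rfl he' hx' hy' hz' le_rfl hxz'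
          (by rw [zero_mul]; positivity)
        push_cast
        nlinarith [H]
      · -- 2 ≤ i
        have hwy : pbH s p (i-1-1) * pbH s p i ≤ pbH s p (i-1) ^ 2 := by
          have := IH hps (i-1) (by omega)
          rwa [show i - 1 + 1 = i from by omega] at this
        have hw : 0 ≤ pbH s p (i-1-1) := pbH_nonneg hps _
        have H := key (p a) (1 - p a) (i:ℝ) ((s.card:ℝ) + 1 - (i:ℝ))
          (pbH s p (i-1)) (pbH s p i) (pbH s p (i+1)) (pbH s p (i-1-1))
          hp0 hq0 hc he hx hy hz hw hxz hwy
        push_cast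
        nlinarith [H]

lemma poissonBinomial_eq_pbAux (k : ℕ) (p : Fin k → ℝ) (i : ℕ) :
    poissonBinomial k p i = pbAux Finset.univ p i := by
  unfold poissonBinomial pbAux
  apply Finset.sum_congr rfl
  intro t _
  rw [Finset.compl_eq_univ_sdiff]

lemma open_case (k : ℕ) (p : Fin k → ℝ) (hp : ∀ j, p j ∈ Set.Ioo (0:ℝ) 1)
    (i : ℕ) (h1 : 1 ≤ i) :
    poissonBinomial k p (i-1) * ((i-1).factorial : ℝ) * ((k-(i-1)).factorial : ℝ)
      * (poissonBinomial k p (i+1) * ((i+1).factorial : ℝ) * ((k-(i+1)).factorial : ℝ))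
      ≤ (poissonBinomial k p i * (i.factorial : ℝ) * ((k-i).factorial : ℝ))^2 := by
  have hcard : (Finset.univ : Finset (Fin k)).card = k := by simp
  have H := pbH_ulc (Finset.univ : Finset (Fin k)) (fun j _ => hp j) i h1
  simp only [pbH, hcard, ← poissonBinomial_eq_pbAux] at H
  calc poissonBinomial k p (i-1) * ((i-1).factorial : ℝ) * ((k-(i-1)).factorial : ℝ)
      * (poissonBinomial k p (i+1) * ((i+1).factorial : ℝ) * ((k-(i+1)).factorial : ℝ))
      = poissonBinomial k p (i-1) * ((i-1).factorial : ℝ) * ((k-(i-1)).factorial : ℝ)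
      * (poissonBinomial k p (i+1) * ((i+1).factorial : ℝ) * ((k-(i+1)).factorial : ℝ)) := rfl
    _ ≤ _ := H


/-- Poisson binomial probabilities are ultra log-concave: for
`p ∈ [0,1]^k` and `1 ≤ i ≤ k-1`,
`f_{k,i}² ≥ ((i+1)/i)·((k-i+1)/(k-i))·f_{k,i-1}·f_{k,i+1}`. -/
theorem stmt14 (k : ℕ) (p : Fin k → ℝ) (hp : ∀ j, p j ∈ Set.Icc (0 : ℝ) 1)
    (i : ℕ) (h1 : 1 ≤ i) (h2 : i < k) :
    (((i : ℝ) + 1) / i) * ((((k : ℝ) - i) + 1) / ((k : ℝ) - i)) *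
        (poissonBinomial k p (i - 1) * poissonBinomial k p (i + 1)) ≤
      (poissonBinomial k p i) ^ 2 := by
  -- continuity step: get the factorial-form inequality at the (possibly boundary) p
  have hcont : ∀ n : ℕ,
      Continuous fun ε : ℝ => poissonBinomial k (fun j => (1-ε) * p j + ε/2) n := by
    intro n
    unfold poissonBinomial
    apply continuous_finset_sum
    intro t _
    apply Continuous.mul
    · apply continuous_finset_prod
      intro j _
      fun_prop
    · apply continuous_finset_prod
      intro j _
      fun_prop
  set F : ℝ → ℝ := fun ε =>
    poissonBinomial k (fun j => (1-ε) * p j + ε/2) (i-1) * ((i-1).factorial : ℝ)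
      * ((k-(i-1)).factorial : ℝ)
      * (poissonBinomial k (fun j => (1-ε) * p j + ε/2) (i+1) * ((i+1).factorial : ℝ)
      * ((k-(i+1)).factorial : ℝ)) with hFdef
  set G : ℝ → ℝ := fun ε =>
    (poissonBinomial k (fun j => (1-ε) * p j + ε/2) i * (i.factorial : ℝ)
      * ((k-i).factorial : ℝ))^2 with hGdef
  have hFG : ∀ ε ∈ Set.Ioo (0:ℝ) 1, F ε ≤ G ε := by
    intro ε hε
    apply open_case
    · intro j
      obtain ⟨hp0, hp1⟩ := hp j
      obtain ⟨he0, he1⟩ := hε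
      constructor
      · have : 0 ≤ (1-ε) * p j := mul_nonneg (by linarith) hp0
        linarith
      · have : (1-ε) * p j ≤ (1-ε) := by nlinarith
        linarith
    · exact h1
  have hF : Filter.Tendsto F (nhdsWithin 0 (Set.Ioi (0:ℝ))) (nhds (F 0)) := by
    apply Filter.Tendsto.mono_left _ nhdsWithin_le_nhds
    apply Continuous.tendsto
    apply Continuous.mul
    apply Continuous.mul
    apply Continuous.mul
    exact hcont (i-1)
    exact continuous_const
    exact continuous_const
    apply Continuous.mul
    apply Continuous.mul
    exact hcont (i+1)
    exact continuous_const
    exact continuous_const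
  have hG : Filter.Tendsto G (nhdsWithin 0 (Set.Ioi (0:ℝ))) (nhds (G 0)) := by
    apply Filter.Tendsto.mono_left _ nhdsWithin_le_nhds
    apply Continuous.tendsto
    apply Continuous.pow
    apply Continuous.mul
    apply Continuous.mul
    exact hcont i
    exact continuous_const
    exact continuous_const
  have hev : ∀ᶠ ε in nhdsWithin 0 (Set.Ioi (0:ℝ)), F ε ≤ G ε := by
    filter_upwards [Ioo_mem_nhdsGT_of_mem (Set.left_mem_Ico.2 zero_lt_one)] with ε hε
    exact hFG ε hε
  have hle : F 0 ≤ G 0 := le_of_tendsto_of_tendsto hF hG hev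
  have hp0 : (fun j => (1-(0:ℝ)) * p j + 0/2) = p := by
    funext j; ring
  rw [hFdef, hGdef] at hle
  simp only [hp0] at hle
  -- now convert the factorial form into the stated form
  set f0 := poissonBinomial k p (i-1)
  set f1 := poissonBinomial k p i
  set f2 := poissonBinomial k p (i+1)
  set I := (i:ℝ) with hI
  have hIpos : (0:ℝ) < I := by rw [hI]; exact_mod_cast h1
  have hM : ((k-i:ℕ):ℝ) = (k:ℝ) - I := by rw [hI]; exact_mod_cast Nat.cast_sub h2.le
  set M := ((k-i:ℕ):ℝ) with hMdef
  have hMpos : (0:ℝ) < M := by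
    rw [hMdef]
    exact_mod_cast Nat.sub_pos_of_lt h2
  set a := (((i-1).factorial : ℕ) : ℝ) with ha
  set b := (((k-i-1).factorial : ℕ) : ℝ) with hb
  have hapos : (0:ℝ) < a := by rw [ha]; exact_mod_cast Nat.factorial_pos _
  have hbpos : (0:ℝ) < b := by rw [hb]; exact_mod_cast Nat.factorial_pos _
  have e1 : ((i.factorial : ℕ) : ℝ) = I * a := by
    rw [ha, hI, ← Nat.cast_mul, ← Nat.mul_factorial_pred (by omega : i ≠ 0)]
  have e2 : (((k-i).factorial : ℕ) : ℝ) = M * b := by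
    rw [hb, hMdef, ← Nat.cast_mul, ← Nat.mul_factorial_pred (by omega : k - i ≠ 0)]
  have e3 : (((k-(i-1)).factorial : ℕ) : ℝ) = (M+1) * (M * b) := by
    rw [show k - (i-1) = (k-i) + 1 from by omega, Nat.factorial_succ, Nat.cast_mul, e2]
    push_cast [hMdef]
    ring
  have e4 : (((i+1).factorial : ℕ) : ℝ) = (I+1) * (I * a) := by
    rw [Nat.factorial_succ, Nat.cast_mul, e1]
    push_cast [hI]
    ring
  have e5 : (((k-(i+1)).factorial : ℕ) : ℝ) = b := by
    rw [hb, show k - (i+1) = k - i - 1 from by omega]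
  rw [e3, e4, e5, e1, e2] at hle
  have hstep : (I+1) * (M+1) * (f0 * f2) ≤ I * M * f1^2 := by
    have hpos : (0:ℝ) < I * M * (a*b)^2 := by positivity
    apply le_of_mul_le_mul_right _ hpos
    calc (I+1) * (M+1) * (f0 * f2) * (I * M * (a*b)^2)
        = f0 * a * ((M+1) * (M * b)) * (f2 * ((I+1) * (I * a)) * b) := by ring
      _ ≤ (f1 * (I * a) * (M * b))^2 := hle
      _ = I * M * f1^2 * (I * M * (a*b)^2) := by ring
  have hKI : (k:ℝ) - (i:ℝ) = M := hM.symm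
  rw [hKI]
  rw [div_mul_div_comm, div_mul_eq_mul_div, div_le_iff₀ (by positivity : (0:ℝ) < I * M)]
  nlinarith [hstep]
end

section
/- Monotone likelihood ratio in a single parameter: with f_{k,i}(p) the Poisson binomial probabilities for parameters p = (p₁,…,p_k) ∈ (0,1)^k, for each 1 ≤ i ≤ k and each coordinate j, the ratio r_{k,i}(p) = f_{k,i}(p)/f_{k,i−1}(p) is strictly increasing as a function of p_j (with the other coordinates fixed). -/
open Polynomial Finset

noncomputable def pbPoly {ι : Type*} (p : ι → ℝ) (s : Finset ι) : ℝ[X] :=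
  ∏ l ∈ s, (C (1 - p l) + C (p l) * X)

lemma pbPoly_coeff {ι : Type*} [DecidableEq ι] (p : ι → ℝ) (s : Finset ι) (i : ℕ) :
    (pbPoly p s).coeff i =
      ∑ S ∈ s.powersetCard i, (∏ l ∈ S, p l) * ∏ l ∈ s \ S, (1 - p l) := by
  unfold pbPoly
  have h : ∀ l ∈ s, C (1 - p l) + C (p l) * X = (C (p l) * X + C (1 - p l)) := by
    intro l _; ring
  rw [Finset.prod_congr rfl h, Finset.prod_add, Polynomial.finset_sum_coeff]
  have hterm : ∀ t ∈ s.powerset,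
      ((∏ l ∈ t, C (p l) * X) * ∏ l ∈ s \ t, C (1 - p l)).coeff i
        = if t.card = i then (∏ l ∈ t, p l) * ∏ l ∈ s \ t, (1 - p l) else 0 := by
    intro t _
    rw [Finset.prod_mul_distrib, Finset.prod_const, ← map_prod, ← map_prod,
      mul_comm ((C (∏ x ∈ t, p x)) * X ^ t.card), ← mul_assoc, ← map_mul,
      Polynomial.coeff_C_mul, Polynomial.coeff_X_pow]
    by_cases h : i = t.card <;> simp [h, mul_comm, eq_comm]
  rw [Finset.sum_congr rfl hterm, Finset.sum_ite, Finset.sum_const_zero, add_zero,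
    Finset.powersetCard_eq_filter]

lemma pbPoly_coeff_eq_zero {ι : Type*} [DecidableEq ι] (p : ι → ℝ) (s : Finset ι) {i : ℕ}
    (hi : s.card < i) : (pbPoly p s).coeff i = 0 := by
  rw [pbPoly_coeff, Finset.powersetCard_eq_empty.mpr hi, Finset.sum_empty]

lemma pbPoly_coeff_nonneg {ι : Type*} [DecidableEq ι] {p : ι → ℝ} {s : Finset ι}
    (hp : ∀ l ∈ s, p l ∈ Set.Ioo (0:ℝ) 1) (i : ℕ) : 0 ≤ (pbPoly p s).coeff i := by
  rw [pbPoly_coeff]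
  refine Finset.sum_nonneg fun S hS => ?_
  rw [Finset.mem_powersetCard] at hS
  refine mul_nonneg (Finset.prod_nonneg fun l hl => (hp l (hS.1 hl)).1.le)
    (Finset.prod_nonneg fun l hl => ?_)
  have := (hp l (Finset.mem_sdiff.mp hl).1).2
  linarith

lemma pbPoly_coeff_pos {ι : Type*} [DecidableEq ι] {p : ι → ℝ} {s : Finset ι}
    (hp : ∀ l ∈ s, p l ∈ Set.Ioo (0:ℝ) 1) {i : ℕ} (hi : i ≤ s.card) :
    0 < (pbPoly p s).coeff i := by
  rw [pbPoly_coeff]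
  obtain ⟨t, hts, htc⟩ := Finset.exists_subset_card_eq hi
  refine Finset.sum_pos' (fun S hS => ?_) ⟨t, Finset.mem_powersetCard.mpr ⟨hts, htc⟩, ?_⟩
  · rw [Finset.mem_powersetCard] at hS
    refine mul_nonneg (Finset.prod_nonneg fun l hl => (hp l (hS.1 hl)).1.le)
      (Finset.prod_nonneg fun l hl => ?_)
    have := (hp l (Finset.mem_sdiff.mp hl).1).2
    linarith
  · refine mul_pos (Finset.prod_pos fun l hl => (hp l (hts hl)).1)
      (Finset.prod_pos fun l hl => ?_)
    have := (hp l (Finset.mem_sdiff.mp hl).1).2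
    linarith

lemma pbPoly_coeff_zero_succ {ι : Type*} [DecidableEq ι] {p : ι → ℝ} {s : Finset ι}
    (hp : ∀ l ∈ s, p l ∈ Set.Ioo (0:ℝ) 1) {i : ℕ} (h : (pbPoly p s).coeff i = 0) :
    (pbPoly p s).coeff (i+1) = 0 := by
  by_contra hne
  have : i + 1 ≤ s.card := by
    by_contra hgt
    exact hne (pbPoly_coeff_eq_zero p s (by omega))
  exact absurd h (ne_of_gt (pbPoly_coeff_pos hp (by omega)))

lemma lin_mul_coeff_zero (a b : ℝ) (G : ℝ[X]) : ((C a + C b * X) * G).coeff 0 = a * G.coeff 0 := by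
  simp [add_mul, mul_assoc, Polynomial.mul_coeff_zero]

lemma lin_mul_coeff_succ (a b : ℝ) (G : ℝ[X]) (n : ℕ) :
    ((C a + C b * X) * G).coeff (n+1) = a * G.coeff (n+1) + b * G.coeff n := by
  simp [add_mul, mul_assoc, coeff_X_mul]

lemma pbPoly_insert {ι : Type*} [DecidableEq ι] (p : ι → ℝ) {s : Finset ι} {a : ι}
    (ha : a ∉ s) :
    pbPoly p (insert a s) = (C (1 - p a) + C (p a) * X) * pbPoly p s :=
  Finset.prod_insert ha

/-- Cross inequality derived from weak Newton. -/
lemma pb_cross {ι : Type*} [DecidableEq ι] {p : ι → ℝ} {s : Finset ι}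
    (hp : ∀ l ∈ s, p l ∈ Set.Ioo (0:ℝ) 1)
    (hW : ∀ r, (pbPoly p s).coeff (r+2) * (pbPoly p s).coeff r ≤ ((pbPoly p s).coeff (r+1))^2)
    (r : ℕ) :
    (pbPoly p s).coeff (r+3) * (pbPoly p s).coeff r
      ≤ (pbPoly p s).coeff (r+2) * (pbPoly p s).coeff (r+1) := by
  have hnn : ∀ n, 0 ≤ (pbPoly p s).coeff n := fun n => pbPoly_coeff_nonneg hp n
  rcases eq_or_lt_of_le (hnn (r+1)) with h1 | h1
  · have h3 : (pbPoly p s).coeff (r+2) = 0 := pbPoly_coeff_zero_succ hp h1.symm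
    have h4 : (pbPoly p s).coeff (r+3) = 0 := pbPoly_coeff_zero_succ hp h3
    rw [h4, h3]; nlinarith [hnn r, hnn (r+1)]
  rcases eq_or_lt_of_le (hnn (r+2)) with h2 | h2
  · have h4 : (pbPoly p s).coeff (r+3) = 0 := pbPoly_coeff_zero_succ hp h2.symm
    rw [h4, ← h2]; nlinarith [hnn r, hnn (r+1)]
  have hA : (pbPoly p s).coeff (r+3) * (pbPoly p s).coeff (r+1)
      ≤ ((pbPoly p s).coeff (r+2))^2 := hW (r+1)
  have hB := hW r
  have key : ((pbPoly p s).coeff (r+3) * (pbPoly p s).coeff r) *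
      ((pbPoly p s).coeff (r+2) * (pbPoly p s).coeff (r+1))
      ≤ ((pbPoly p s).coeff (r+2) * (pbPoly p s).coeff (r+1))^2 := by
    nlinarith [mul_le_mul hA hB (mul_nonneg (hnn (r+2)) (hnn r)) (sq_nonneg _),
      hnn r, hnn (r+1), hnn (r+2), hnn (r+3)]
  exact le_of_mul_le_mul_right (by nlinarith) (mul_pos h2 h1)

/-- Weak Newton inequality. -/
lemma pb_newton_weak {ι : Type*} [DecidableEq ι] {p : ι → ℝ} {s : Finset ι}
    (hp : ∀ l ∈ s, p l ∈ Set.Ioo (0:ℝ) 1) (r : ℕ) :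
    (pbPoly p s).coeff (r+2) * (pbPoly p s).coeff r ≤ ((pbPoly p s).coeff (r+1))^2 := by
  induction s using Finset.induction_on generalizing r with
  | empty => simp [pbPoly, Polynomial.coeff_one]
  | @insert a s ha IH =>
    have hps : ∀ l ∈ s, p l ∈ Set.Ioo (0:ℝ) 1 := fun l hl => hp l (Finset.mem_insert_of_mem hl)
    have hpa := hp a (Finset.mem_insert_self a s)
    have IH' : ∀ r, (pbPoly p s).coeff (r+2) * (pbPoly p s).coeff r
        ≤ ((pbPoly p s).coeff (r+1))^2 := fun r => IH hps r
    have hC := pb_cross hps IH'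
    have hnn : ∀ n, 0 ≤ (pbPoly p s).coeff n := fun n => pbPoly_coeff_nonneg hps n
    have hu : (0:ℝ) < 1 - p a := by have := hpa.2; linarith
    have hv : (0:ℝ) < p a := hpa.1
    rw [pbPoly_insert p ha]
    set F := (C (1 - p a) + C (p a) * X) * pbPoly p s with hF
    rcases r with _ | r
    · have e0 : F.coeff 0 = (1 - p a) * (pbPoly p s).coeff 0 := lin_mul_coeff_zero _ _ _
      have e1 : F.coeff (0+1) = (1 - p a) * (pbPoly p s).coeff 1 + p a * (pbPoly p s).coeff 0 :=
        lin_mul_coeff_succ _ _ _ 0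
      have e2 : F.coeff (0+2) = (1 - p a) * (pbPoly p s).coeff 2 + p a * (pbPoly p s).coeff 1 :=
        lin_mul_coeff_succ _ _ _ 1
      rw [e0, e1, e2]
      nlinarith [mul_le_mul_of_nonneg_left (IH' 0) (sq_nonneg (1 - p a)),
        mul_nonneg (mul_pos hu hv).le (mul_nonneg (hnn 1) (hnn 0)),
        mul_nonneg (sq_nonneg (p a)) (sq_nonneg ((pbPoly p s).coeff 0))]
    · have e1 : F.coeff (r+1) = (1 - p a) * (pbPoly p s).coeff (r+1) + p a * (pbPoly p s).coeff r :=
        lin_mul_coeff_succ _ _ _ r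
      have e2 : F.coeff (r+1+1) = (1 - p a) * (pbPoly p s).coeff (r+2) + p a * (pbPoly p s).coeff (r+1) :=
        lin_mul_coeff_succ _ _ _ (r+1)
      have e3 : F.coeff (r+1+2) = (1 - p a) * (pbPoly p s).coeff (r+3) + p a * (pbPoly p s).coeff (r+2) :=
        lin_mul_coeff_succ _ _ _ (r+2)
      rw [e1, e2, e3]
      have IHa : (pbPoly p s).coeff (r+3) * (pbPoly p s).coeff (r+1)
          ≤ ((pbPoly p s).coeff (r+2))^2 := IH' (r+1)
      nlinarith [mul_le_mul_of_nonneg_left IHa (sq_nonneg (1 - p a)),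
        mul_le_mul_of_nonneg_left (IH' r) (sq_nonneg (p a)),
        mul_le_mul_of_nonneg_left (hC r) (mul_pos hu hv).le]

/-- Strict Newton inequality. -/
lemma pb_newton_strict {ι : Type*} [DecidableEq ι] {p : ι → ℝ} {s : Finset ι}
    (hp : ∀ l ∈ s, p l ∈ Set.Ioo (0:ℝ) 1) {r : ℕ} (hr : r + 1 ≤ s.card) :
    (pbPoly p s).coeff (r+2) * (pbPoly p s).coeff r < ((pbPoly p s).coeff (r+1))^2 := by
  induction s using Finset.induction_on generalizing r with
  | empty => simp at hr
  | @insert a s ha IH =>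
    have hps : ∀ l ∈ s, p l ∈ Set.Ioo (0:ℝ) 1 := fun l hl => hp l (Finset.mem_insert_of_mem hl)
    have hpa := hp a (Finset.mem_insert_self a s)
    have hW : ∀ r, (pbPoly p s).coeff (r+2) * (pbPoly p s).coeff r
        ≤ ((pbPoly p s).coeff (r+1))^2 := fun r => pb_newton_weak hps r
    have hC := pb_cross hps hW
    have hnn : ∀ n, 0 ≤ (pbPoly p s).coeff n := fun n => pbPoly_coeff_nonneg hps n
    have hu : (0:ℝ) < 1 - p a := by have := hpa.2; linarith
    have hv : (0:ℝ) < p a := hpa.1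
    rw [Finset.card_insert_of_notMem ha] at hr
    rw [pbPoly_insert p ha]
    set F := (C (1 - p a) + C (p a) * X) * pbPoly p s with hF
    rcases r with _ | r
    · have e0 : F.coeff 0 = (1 - p a) * (pbPoly p s).coeff 0 := lin_mul_coeff_zero _ _ _
      have e1 : F.coeff (0+1) = (1 - p a) * (pbPoly p s).coeff 1 + p a * (pbPoly p s).coeff 0 :=
        lin_mul_coeff_succ _ _ _ 0
      have e2 : F.coeff (0+2) = (1 - p a) * (pbPoly p s).coeff 2 + p a * (pbPoly p s).coeff 1 :=
        lin_mul_coeff_succ _ _ _ 1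
      rw [e0, e1, e2]
      have g0 : 0 < (pbPoly p s).coeff 0 := pbPoly_coeff_pos hps (Nat.zero_le _)
      nlinarith [mul_le_mul_of_nonneg_left (hW 0) (sq_nonneg (1 - p a)),
        mul_nonneg (mul_pos hu hv).le (mul_nonneg (hnn 1) (hnn 0)),
        mul_pos (mul_pos hv hv) (mul_pos g0 g0)]
    · have e1 : F.coeff (r+1) = (1 - p a) * (pbPoly p s).coeff (r+1) + p a * (pbPoly p s).coeff r :=
        lin_mul_coeff_succ _ _ _ r
      have e2 : F.coeff (r+1+1) = (1 - p a) * (pbPoly p s).coeff (r+2) + p a * (pbPoly p s).coeff (r+1) :=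
        lin_mul_coeff_succ _ _ _ (r+1)
      have e3 : F.coeff (r+1+2) = (1 - p a) * (pbPoly p s).coeff (r+3) + p a * (pbPoly p s).coeff (r+2) :=
        lin_mul_coeff_succ _ _ _ (r+2)
      rw [e1, e2, e3]
      rcases Nat.lt_or_ge (r+1+1) (s.card + 1) with hrc | hrc
      · -- r + 2 ≤ s.card, so strict IH applies at r
        have hstrict : (pbPoly p s).coeff (r+2) * (pbPoly p s).coeff r
            < ((pbPoly p s).coeff (r+1))^2 := IH hps (by omega)
        have IHa : (pbPoly p s).coeff (r+3) * (pbPoly p s).coeff (r+1)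
            ≤ ((pbPoly p s).coeff (r+2))^2 := hW (r+1)
        nlinarith [mul_le_mul_of_nonneg_left IHa (sq_nonneg (1 - p a)),
          mul_lt_mul_of_pos_left hstrict (mul_pos hv hv),
          mul_le_mul_of_nonneg_left (hC r) (mul_pos hu hv).le]
      · -- r + 1 = s.card
        have hre : r + 1 = s.card := by omega
        have z1 : (pbPoly p s).coeff (r+2) = 0 := pbPoly_coeff_eq_zero p s (by omega)
        have z2 : (pbPoly p s).coeff (r+3) = 0 := pbPoly_coeff_eq_zero p s (by omega)
        have gpos : 0 < (pbPoly p s).coeff (r+1) := pbPoly_coeff_pos hps (by omega)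
        rw [z1, z2]
        nlinarith [mul_pos (mul_pos hv hv) (mul_pos gpos gpos), hnn r,
          mul_nonneg hu.le (hnn (r+1)), mul_nonneg hv.le (hnn r)]

lemma poissonBinomial_eq_coeff (k : ℕ) (p : Fin k → ℝ) (i : ℕ) :
    poissonBinomial k p i = (pbPoly p (Finset.univ : Finset (Fin k))).coeff i := by
  rw [pbPoly_coeff, poissonBinomial]
  exact Finset.sum_congr rfl fun S _ => by rw [Finset.compl_eq_univ_sdiff]

/-- monotone likelihood ratio in a single parameter: for `p ∈ (0,1)^k`,
`1 ≤ i ≤ k` and a coordinate `j`, the ratio `f_{k,i}(p)/f_{k,i-1}(p)` is strictly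
increasing in `p_j` with the other coordinates fixed. -/
theorem stmt15 (k i : ℕ) (h1 : 1 ≤ i) (h2 : i ≤ k) (j : Fin k)
    (p q : Fin k → ℝ) (hp : ∀ l, p l ∈ Set.Ioo (0 : ℝ) 1)
    (hq : ∀ l, q l ∈ Set.Ioo (0 : ℝ) 1)
    (hpq : ∀ l, l ≠ j → p l = q l) (hlt : p j < q j) :
    poissonBinomial k p i / poissonBinomial k p (i - 1) <
      poissonBinomial k q i / poissonBinomial k q (i - 1) := by
  have hcardu : (Finset.univ : Finset (Fin k)).card = k := by simp
  have hpu : ∀ l ∈ (Finset.univ : Finset (Fin k)), p l ∈ Set.Ioo (0:ℝ) 1 := fun l _ => hp l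
  have hqu : ∀ l ∈ (Finset.univ : Finset (Fin k)), q l ∈ Set.Ioo (0:ℝ) 1 := fun l _ => hq l
  have dp : 0 < poissonBinomial k p (i - 1) := by
    rw [poissonBinomial_eq_coeff]; exact pbPoly_coeff_pos hpu (by omega)
  have dq : 0 < poissonBinomial k q (i - 1) := by
    rw [poissonBinomial_eq_coeff]; exact pbPoly_coeff_pos hqu (by omega)
  rw [div_lt_div_iff₀ dp dq]
  have hdecomp : ∀ x : Fin k → ℝ, pbPoly x (Finset.univ : Finset (Fin k))
      = (C (1 - x j) + C (x j) * X) * pbPoly x (Finset.univ.erase j) := fun x =>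
    (Finset.mul_prod_erase Finset.univ _ (Finset.mem_univ j)).symm
  set H := pbPoly p ((Finset.univ : Finset (Fin k)).erase j) with hH
  have hqp : pbPoly q ((Finset.univ : Finset (Fin k)).erase j) = H :=
    Finset.prod_congr rfl fun l hl => by rw [hpq l (Finset.ne_of_mem_erase hl)]
  have hpe : ∀ l ∈ (Finset.univ : Finset (Fin k)).erase j, p l ∈ Set.Ioo (0:ℝ) 1 :=
    fun l _ => hp l
  have hcard : ((Finset.univ : Finset (Fin k)).erase j).card = k - 1 := by
    rw [Finset.card_erase_of_mem (Finset.mem_univ j), hcardu]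
  have hnn : ∀ n, 0 ≤ H.coeff n := fun n => pbPoly_coeff_nonneg hpe n
  obtain ⟨i', rfl⟩ : ∃ i', i = i' + 1 := ⟨i - 1, by omega⟩
  simp only [Nat.add_sub_cancel] at dp dq ⊢
  have hu : (0:ℝ) < 1 - p j := by have := (hp j).2; linarith
  have hu' : (0:ℝ) < 1 - q j := by have := (hq j).2; linarith
  rcases i' with _ | i''
  · -- i = 1
    have Ep1 : poissonBinomial k p 1 = (1 - p j) * H.coeff 1 + p j * H.coeff 0 := by
      rw [poissonBinomial_eq_coeff, hdecomp p]; exact lin_mul_coeff_succ _ _ _ 0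
    have Eq1 : poissonBinomial k q 1 = (1 - q j) * H.coeff 1 + q j * H.coeff 0 := by
      rw [poissonBinomial_eq_coeff, hdecomp q, hqp]; exact lin_mul_coeff_succ _ _ _ 0
    have Ep0 : poissonBinomial k p 0 = (1 - p j) * H.coeff 0 := by
      rw [poissonBinomial_eq_coeff, hdecomp p]; exact lin_mul_coeff_zero _ _ _
    have Eq0 : poissonBinomial k q 0 = (1 - q j) * H.coeff 0 := by
      rw [poissonBinomial_eq_coeff, hdecomp q, hqp]; exact lin_mul_coeff_zero _ _ _
    have g0 : 0 < H.coeff 0 := pbPoly_coeff_pos hpe (Nat.zero_le _)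
    rw [Ep1, Eq1, Ep0, Eq0]
    nlinarith [mul_pos (sub_pos.2 hlt) (mul_pos g0 g0)]
  · -- i = i'' + 2
    have Ep2 : poissonBinomial k p (i''+2) = (1 - p j) * H.coeff (i''+2) + p j * H.coeff (i''+1) := by
      rw [poissonBinomial_eq_coeff, hdecomp p]; exact lin_mul_coeff_succ _ _ _ (i''+1)
    have Eq2 : poissonBinomial k q (i''+2) = (1 - q j) * H.coeff (i''+2) + q j * H.coeff (i''+1) := by
      rw [poissonBinomial_eq_coeff, hdecomp q, hqp]; exact lin_mul_coeff_succ _ _ _ (i''+1)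
    have Ep1 : poissonBinomial k p (i''+1) = (1 - p j) * H.coeff (i''+1) + p j * H.coeff i'' := by
      rw [poissonBinomial_eq_coeff, hdecomp p]; exact lin_mul_coeff_succ _ _ _ i''
    have Eq1 : poissonBinomial k q (i''+1) = (1 - q j) * H.coeff (i''+1) + q j * H.coeff i'' := by
      rw [poissonBinomial_eq_coeff, hdecomp q, hqp]; exact lin_mul_coeff_succ _ _ _ i''
    have hN : H.coeff (i''+2) * H.coeff i'' < (H.coeff (i''+1))^2 :=
      pb_newton_strict hpe (by omega)
    rw [Ep2, Eq2, Ep1, Eq1]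
    nlinarith [mul_pos (sub_pos.2 hlt) (sub_pos.2 hN)]
end

section
/- Monotone likelihood ratio in the index: for p ∈ (0,1)^k and 1 ≤ i ≤ k−1, the Poisson binomial probabilities satisfy f_{k,i}(p)/f_{k,i−1}(p) > f_{k,i+1}(p)/f_{k,i}(p). -/
open Finset

variable {α : Type*} [DecidableEq α]

/-- auxiliary: Poisson binomial over a finset. -/
noncomputable def pb (w : α → ℝ) (s : Finset α) (i : ℕ) : ℝ :=
  ∑ S ∈ s.powersetCard i, (∏ j ∈ S, w j) * ∏ j ∈ s \ S, (1 - w j)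

lemma pb_insert (w : α → ℝ) {a : α} {s : Finset α} (ha : a ∉ s) (i : ℕ) :
    pb w (insert a s) (i + 1) = w a * pb w s i + (1 - w a) * pb w s (i + 1) := by
  unfold pb
  rw [Finset.powersetCard_succ_insert ha, Finset.sum_union, add_comm]
  · congr 1
    · rw [Finset.sum_image, Finset.mul_sum]
      · refine Finset.sum_congr rfl fun S hS => ?_
        rw [Finset.mem_powersetCard] at hS
        have haS : a ∉ S := fun h => ha (hS.1 h)
        rw [Finset.prod_insert haS]
        have : insert a s \ insert a S = s \ S := by
          ext x
          simp only [Finset.mem_sdiff, Finset.mem_insert]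
          constructor
          · rintro ⟨hx | hx, hx2⟩
            · exact absurd (Or.inl hx) hx2
            · exact ⟨hx, fun h => hx2 (Or.inr h)⟩
          · rintro ⟨hx, hx2⟩
            exact ⟨Or.inr hx, fun h => by
              rcases h with h | h
              · exact ha (h ▸ hx)
              · exact hx2 h⟩
        rw [this]; ring
      · intro S hS T hT hST
        rw [Finset.mem_coe, Finset.mem_powersetCard] at hS hT
        have haS : a ∉ S := fun h => ha (hS.1 h)
        have haT : a ∉ T := fun h => ha (hT.1 h)
        ext x
        constructor
        · intro hx
          have : x ∈ insert a T := hST ▸ Finset.mem_insert_of_mem hx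
          rcases Finset.mem_insert.1 this with h | h
          · exact absurd (h ▸ hx) haS
          · exact h
        · intro hx
          have : x ∈ insert a S := hST ▸ Finset.mem_insert_of_mem hx
          rcases Finset.mem_insert.1 this with h | h
          · exact absurd (h ▸ hx) haT
          · exact h
    · rw [Finset.mul_sum]
      refine Finset.sum_congr rfl fun S hS => ?_
      rw [Finset.mem_powersetCard] at hS
      have haS : a ∉ S := fun h => ha (hS.1 h)
      have : insert a s \ S = insert a (s \ S) := by
        ext x
        simp only [Finset.mem_sdiff, Finset.mem_insert]
        constructor
        · rintro ⟨hx | hx, hx2⟩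
          · exact Or.inl hx
          · exact Or.inr ⟨hx, hx2⟩
        · rintro (hx | ⟨hx, hx2⟩)
          · exact ⟨Or.inl hx, fun h => haS (hx ▸ h)⟩
          · exact ⟨Or.inr hx, hx2⟩
      rw [this, Finset.prod_insert (fun h => ha (Finset.mem_sdiff.1 h).1)]
      ring
  · rw [Finset.disjoint_left]
    intro S hS hS'
    rw [Finset.mem_powersetCard] at hS
    obtain ⟨T, hT, rfl⟩ := Finset.mem_image.1 hS'
    rw [Finset.mem_powersetCard] at hT
    exact ha (hS.1 (Finset.mem_insert_self a T))

lemma pb_insert_zero (w : α → ℝ) {a : α} {s : Finset α} (ha : a ∉ s) :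
    pb w (insert a s) 0 = (1 - w a) * pb w s 0 := by
  simp only [pb, Finset.powersetCard_zero, Finset.sum_singleton, Finset.prod_empty,
    Finset.sdiff_empty, one_mul]
  rw [Finset.prod_insert ha]

lemma pb_nonneg {w : α → ℝ} {s : Finset α} (hw : ∀ j ∈ s, w j ∈ Set.Ioo (0:ℝ) 1) (i : ℕ) :
    0 ≤ pb w s i := by
  refine Finset.sum_nonneg fun S hS => ?_
  rw [Finset.mem_powersetCard] at hS
  refine mul_nonneg (Finset.prod_nonneg fun j hj => (hw j (hS.1 hj)).1.le)
    (Finset.prod_nonneg fun j hj => ?_)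
  have := (hw j (Finset.mem_sdiff.1 hj).1).2
  linarith

lemma pb_pos {w : α → ℝ} {s : Finset α} (hw : ∀ j ∈ s, w j ∈ Set.Ioo (0:ℝ) 1) {i : ℕ}
    (hi : i ≤ s.card) : 0 < pb w s i := by
  refine Finset.sum_pos (fun S hS => ?_) (Finset.powersetCard_nonempty.2 hi)
  rw [Finset.mem_powersetCard] at hS
  refine mul_pos (Finset.prod_pos fun j hj => (hw j (hS.1 hj)).1)
    (Finset.prod_pos fun j hj => ?_)
  have := (hw j (Finset.mem_sdiff.1 hj).1).2
  linarith

lemma pb_eq_zero {w : α → ℝ} {s : Finset α} {i : ℕ} (hi : s.card < i) : pb w s i = 0 := by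
  unfold pb
  rw [Finset.powersetCard_eq_empty.2 hi, Finset.sum_empty]

/-- Nonstrict log-concavity. -/
lemma pb_lc {w : α → ℝ} (s : Finset α) (hw : ∀ j ∈ s, w j ∈ Set.Ioo (0:ℝ) 1) (i : ℕ) :
    pb w s i * pb w s (i + 2) ≤ pb w s (i + 1) ^ 2 := by
  induction s using Finset.induction_on generalizing i with
  | empty =>
    have : pb w (∅ : Finset α) (i + 2) = 0 := pb_eq_zero (by simp)
    rw [this, mul_zero]
    positivity
  | insert _ _ ha =>
    rename_i a s ih
    have hw' : ∀ j ∈ s, w j ∈ Set.Ioo (0:ℝ) 1 := fun j hj => hw j (Finset.mem_insert_of_mem hj)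
    have hwa := hw a (Finset.mem_insert_self a s)
    have hP : 0 < w a := hwa.1
    have hq : 0 < 1 - w a := by linarith [hwa.2]
    have hnn : ∀ m, 0 ≤ pb w s m := pb_nonneg hw'
    have ihs := fun m => ih hw' m
    -- cross lemma
    have cross : ∀ m : ℕ, pb w s m * pb w s (m + 3) ≤ pb w s (m + 1) * pb w s (m + 2) := by
      intro m
      by_cases h : m + 3 ≤ s.card
      · have h1 := ihs m
        have h2 := ihs (m + 1)
        have p1 : 0 < pb w s (m + 1) := pb_pos hw' (by omega)
        have p2 : 0 < pb w s (m + 2) := pb_pos hw' (by omega)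
        nlinarith [mul_le_mul h1 h2 (mul_nonneg (hnn _) (hnn _)) (sq_nonneg _), mul_pos p1 p2,
          hnn m, hnn (m + 3)]
      · rw [pb_eq_zero (show s.card < m + 3 by omega), mul_zero]
        exact mul_nonneg (hnn _) (hnn _)
    cases i with
    | zero =>
      rw [pb_insert_zero w ha, pb_insert w ha 0, pb_insert w ha 1]
      have h1 := ihs 0
      norm_num at h1 ⊢
      nlinarith [hnn 0, hnn 1, hnn 2, mul_nonneg (hnn 0) (hnn 1),
        mul_le_mul_of_nonneg_left h1 (mul_pos hq hq).le,
        mul_nonneg (mul_nonneg hP.le hq.le) (mul_nonneg (hnn 0) (hnn 1)),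
        mul_nonneg (mul_nonneg hP.le hP.le) (mul_nonneg (hnn 0) (hnn 0))]
    | succ j =>
      rw [pb_insert w ha j, pb_insert w ha (j + 1), pb_insert w ha (j + 2)]
      simp only [show j+1+1 = j+2 from rfl, show j+1+2 = j+3 from rfl,
        show j+2+1 = j+3 from rfl] at *
      have D1 := ihs j
      have D2 := ihs (j + 1)
      have E := cross j
      nlinarith [mul_nonneg hP.le hq.le, hnn j, hnn (j+1), hnn (j+2), hnn (j+3),
        mul_le_mul_of_nonneg_left D1 (mul_pos hP hP).le,
        mul_le_mul_of_nonneg_left D2 (mul_pos hq hq).le,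
        mul_le_mul_of_nonneg_left E (mul_nonneg hP.le hq.le)]

/-- Strict log-concavity. -/
lemma pb_slc {w : α → ℝ} (s : Finset α) (hw : ∀ j ∈ s, w j ∈ Set.Ioo (0:ℝ) 1) {i : ℕ}
    (hi : i + 2 ≤ s.card) :
    pb w s i * pb w s (i + 2) < pb w s (i + 1) ^ 2 := by
  induction s using Finset.induction_on generalizing i with
  | empty => simp at hi
  | insert _ _ ha =>
    rename_i a s ih
    have hw' : ∀ j ∈ s, w j ∈ Set.Ioo (0:ℝ) 1 := fun j hj => hw j (Finset.mem_insert_of_mem hj)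
    have hwa := hw a (Finset.mem_insert_self a s)
    have hP : 0 < w a := hwa.1
    have hq : 0 < 1 - w a := by linarith [hwa.2]
    have hnn : ∀ m, 0 ≤ pb w s m := pb_nonneg hw'
    have hlc := fun m => pb_lc s hw' m
    have cross : ∀ m : ℕ, pb w s m * pb w s (m + 3) ≤ pb w s (m + 1) * pb w s (m + 2) := by
      intro m
      by_cases h : m + 3 ≤ s.card
      · have h1 := hlc m
        have h2 := hlc (m + 1)
        have p1 : 0 < pb w s (m + 1) := pb_pos hw' (by omega)
        have p2 : 0 < pb w s (m + 2) := pb_pos hw' (by omega)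
        nlinarith [mul_le_mul h1 h2 (mul_nonneg (hnn _) (hnn _)) (sq_nonneg _), mul_pos p1 p2,
          hnn m, hnn (m + 3)]
      · rw [pb_eq_zero (show s.card < m + 3 by omega), mul_zero]
        exact mul_nonneg (hnn _) (hnn _)
    rw [Finset.card_insert_of_notMem ha] at hi
    cases i with
    | zero =>
      rw [pb_insert_zero w ha, pb_insert w ha 0, pb_insert w ha 1]
      have h1 := hlc 0
      have p0 : 0 < pb w s 0 := pb_pos hw' (Nat.zero_le _)
      norm_num at h1 ⊢
      nlinarith [hnn 0, hnn 1, hnn 2, mul_nonneg (hnn 0) (hnn 1),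
        mul_le_mul_of_nonneg_left h1 (mul_pos hq hq).le,
        mul_nonneg (mul_nonneg hP.le hq.le) (mul_nonneg (hnn 0) (hnn 1)),
        mul_pos (mul_pos hP hP) (mul_pos p0 p0)]
    | succ j =>
      rw [pb_insert w ha j, pb_insert w ha (j + 1), pb_insert w ha (j + 2)]
      simp only [show j+1+1 = j+2 from rfl, show j+1+2 = j+3 from rfl,
        show j+2+1 = j+3 from rfl] at *
      have D1 : pb w s j * pb w s (j + 2) < pb w s (j + 1) ^ 2 := ih hw' (by omega)
      have D2 := hlc (j + 1)
      have E := cross j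
      nlinarith [hnn j, hnn (j+1), hnn (j+2), hnn (j+3),
        mul_lt_mul_of_pos_left D1 (mul_pos hP hP),
        mul_le_mul_of_nonneg_left D2 (mul_pos hq hq).le,
        mul_le_mul_of_nonneg_left E (mul_nonneg hP.le hq.le)]

lemma poissonBinomial_eq_pb' (k : ℕ) (p : Fin k → ℝ) (i : ℕ) :
    (∑ S ∈ Finset.powersetCard i (Finset.univ : Finset (Fin k)),
      (∏ j ∈ S, p j) * ∏ j ∈ Sᶜ, (1 - p j)) = pb p Finset.univ i := by
  unfold pb
  refine Finset.sum_congr rfl fun S _ => ?_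
  rw [Finset.compl_eq_univ_sdiff]

/-- monotone likelihood ratio in the index: for `p ∈ (0,1)^k` and
`1 ≤ i ≤ k-1`, `f_{k,i}(p)/f_{k,i-1}(p) > f_{k,i+1}(p)/f_{k,i}(p)`. -/
theorem stmt16 (k i : ℕ) (h1 : 1 ≤ i) (h2 : i < k) (p : Fin k → ℝ)
    (hp : ∀ l, p l ∈ Set.Ioo (0 : ℝ) 1) :
    poissonBinomial k p (i + 1) / poissonBinomial k p i <
      poissonBinomial k p i / poissonBinomial k p (i - 1) := by
  obtain ⟨m, rfl⟩ : ∃ m, i = m + 1 := ⟨i - 1, by omega⟩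
  have hpb : ∀ j, poissonBinomial k p j = pb p Finset.univ j := fun j => by
    rw [poissonBinomial, poissonBinomial_eq_pb']
  have hw : ∀ j ∈ (Finset.univ : Finset (Fin k)), p j ∈ Set.Ioo (0:ℝ) 1 := fun j _ => hp j
  have hcard : (Finset.univ : Finset (Fin k)).card = k := Finset.card_univ.trans (Fintype.card_fin k)
  have hm : 0 < pb p Finset.univ m := pb_pos hw (by omega)
  have hm1 : 0 < pb p Finset.univ (m + 1) := pb_pos hw (by omega)
  have hslc : pb p Finset.univ m * pb p Finset.univ (m + 2) < pb p Finset.univ (m + 1) ^ 2 :=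
    pb_slc _ hw (by omega)
  simp only [hpb, Nat.add_sub_cancel]
  rw [div_lt_div_iff₀ hm1 hm]
  nlinarith
end

section
/- Newton's inequalities: if a real polynomial P(z) = Σ_{j=0}^k a_j z^j of degree at most k has only real roots, then for all 1 ≤ i ≤ k−1, (a_i/C(k,i))² ≥ (a_{i−1}/C(k,i−1))·(a_{i+1}/C(k,i+1)). -/
open Polynomial


lemma splits_derivative {p : ℝ[X]} (hp : p.Splits) :
    (derivative p).Splits := by
  by_cases hD : derivative p = 0
  · rw [hD]; exact Splits.zero
  have hdle := natDegree_derivative_le p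
  have h1 := p.card_roots_le_derivative
  have h2 := (derivative p).card_roots'
  rw [splits_iff_card_roots] at hp ⊢
  have hnd : p.natDegree ≠ 0 := by
    intro h0
    exact hD (by rw [eq_C_of_natDegree_eq_zero h0, derivative_C])
  omega

lemma natDegree_reflect_le {q : ℝ[X]} {m : ℕ} (h : q.natDegree ≤ m) :
    (reflect m q).natDegree ≤ m := by
  rw [natDegree_le_iff_coeff_eq_zero]
  intro N hN
  rw [coeff_reflect, revAt_eq_self_of_lt hN]
  exact coeff_eq_zero_of_natDegree_lt (lt_of_le_of_lt h hN)

lemma splits_reflect_aux : ∀ (s : Multiset ℝ) (c : ℝ) (m : ℕ), Multiset.card s ≤ m →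
    (reflect m (C c * (s.map fun r => X - C r).prod)).Splits := by
  intro s
  induction s using Multiset.induction with
  | empty =>
      intro c m _
      simp only [Multiset.map_zero, Multiset.prod_zero, mul_one]
      rw [show (C c : ℝ[X]) = C c * X ^ 0 by simp, reflect_C_mul_X_pow]
      exact Splits.mul (Splits.C _) (Splits.X_pow _)
  | cons a t ih =>
      intro c m hm
      simp only [Multiset.card_cons] at hm
      obtain ⟨m', rfl⟩ : ∃ m', m = 1 + m' := ⟨m - 1, by omega⟩
      have e1 : C c * ((a ::ₘ t).map fun r => X - C r).prod
          = (X - C a) * (C c * (t.map fun r => X - C r).prod) := by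
        rw [Multiset.map_cons, Multiset.prod_cons]; ring
      rw [e1, reflect_mul (X - C a) _ (natDegree_X_sub_C a).le ?hb]
      · exact Splits.mul
          (Splits.of_natDegree_le_one (natDegree_reflect_le (natDegree_X_sub_C a).le))
          (ih c m' (by omega))
      case hb =>
        refine (natDegree_mul_le).trans ?_
        simp only [natDegree_C, zero_add]
        rw [natDegree_multiset_prod_X_sub_C_eq_card]
        omega

lemma splits_reflect {q : ℝ[X]} {m : ℕ} (h : q.natDegree ≤ m)
    (hs : q.Splits) : (reflect m q).Splits := by
  have hcard : Multiset.card q.roots ≤ m := (q.card_roots').trans h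
  have e := hs.eq_prod_roots
  rw [e]
  exact splits_reflect_aux _ _ _ hcard


lemma quad_ineq {q : ℝ[X]} (hq : q.natDegree ≤ 2) (hs : q.Splits) :
    4 * q.coeff 0 * q.coeff 2 ≤ q.coeff 1 ^ 2 := by
  by_cases h2 : q.natDegree ≤ 1
  · have hc2 : q.coeff 2 = 0 := coeff_eq_zero_of_natDegree_lt (by omega)
    rw [hc2]
    nlinarith [sq_nonneg (q.coeff 1)]
  · have hcard : Multiset.card q.roots = 2 := by
      rw [splits_iff_card_roots] at hs; omega
    obtain ⟨r, s, hrs⟩ := Multiset.card_eq_two.mp hcard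
    have e := hs.eq_prod_roots
    rw [hrs] at e
    simp only [Multiset.insert_eq_cons, Multiset.map_cons, Multiset.prod_cons,
      Multiset.map_singleton, Multiset.prod_singleton] at e
    set lc := q.leadingCoeff with hlc
    have e2 : q = C lc * X ^ 2 - C (lc * (r + s)) * X + C (lc * (r * s)) := by
      rw [e]; simp only [C_mul, C_add]; ring
    have c0 : q.coeff 0 = lc * (r * s) := by rw [e2]; simp
    have c1 : q.coeff 1 = -(lc * (r + s)) := by
      rw [e2]; simp [coeff_X_pow]
    have c2 : q.coeff 2 = lc := by rw [e2]; simp [coeff_X_pow]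
    rw [c0, c1, c2]
    nlinarith [sq_nonneg (lc * (r - s))]

lemma splits_of_real_roots {P : ℝ[X]}
    (hroots : ∀ z : ℂ, (P.map (algebraMap ℝ ℂ)).IsRoot z → z.im = 0) :
    P.Splits := by
  set Q := P.map (algebraMap ℝ ℂ) with hQ
  have hQsplits : Q.Splits :=
    IsAlgClosed.splits Q
  have e := hQsplits.eq_prod_roots
  have hRroots : Q.roots = (Q.roots.map Complex.re).map (algebraMap ℝ ℂ) := by
    rw [Multiset.map_map]
    symm
    refine Multiset.map_congr rfl ?_ |>.trans (Multiset.map_id _)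
    intro z hz
    have him : z.im = 0 := hroots z ((mem_roots'.mp hz).2)
    exact Complex.ext rfl him.symm  -- ((z.re:ℂ)).im = 0 = z.im
  set M := Q.roots.map Complex.re with hM
  have hlc : Q.leadingCoeff = algebraMap ℝ ℂ P.leadingCoeff :=
    (leadingCoeff_map_of_injective (algebraMap ℝ ℂ).injective P)
  have e2 : Q = (C P.leadingCoeff * (M.map fun r => X - C r).prod).map (algebraMap ℝ ℂ) := by
    rw [e, hRroots, hlc, Polynomial.map_mul, map_C, Polynomial.map_multiset_prod, hM]
    simp only [Multiset.map_map]
    exact congrArg _ (congrArg Multiset.prod (Multiset.map_congr rfl fun z _ => by simp))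
  have ePP : P = C P.leadingCoeff * (M.map fun r => X - C r).prod :=
    (Polynomial.map_injective _ (algebraMap ℝ ℂ).injective) e2
  rw [splits_iff_exists_multiset]
  exact ⟨M, by simpa using ePP⟩


lemma cast_dF (a b : ℕ) : (((a + b).descFactorial b : ℕ) : ℝ)
    = ((a + b).factorial : ℝ) / (a.factorial : ℝ) := by
  rw [Nat.descFactorial_eq_factorial_mul_choose]
  push_cast
  rw [Nat.cast_choose ℝ (by omega : b ≤ a + b), show a + b - b = a from by omega]
  have h1 : ((b.factorial : ℕ) : ℝ) ≠ 0 := by positivity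
  have h2 : ((a.factorial : ℕ) : ℝ) ≠ 0 := by positivity
  field_simp

lemma splits_iterate_derivative (t : ℕ) {p : ℝ[X]} (hp : p.Splits) :
    (derivative^[t] p).Splits := by
  induction t with
  | zero => simpa using hp
  | succ d hd => rw [Function.iterate_succ_apply']; exact splits_derivative hd

/-- Newton's inequalities: if a real polynomial `P(z) = Σ_{j≤k} a_j z^j`
of degree at most `k` has only real roots, then for `1 ≤ i ≤ k-1`,
`(a_i/C(k,i))² ≥ (a_{i-1}/C(k,i-1))·(a_{i+1}/C(k,i+1))`. -/
theorem stmt18 (k : ℕ) (P : Polynomial ℝ) (hdeg : P.degree ≤ k)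
    (hroots : ∀ z : ℂ, (P.map (algebraMap ℝ ℂ)).IsRoot z → z.im = 0)
    (i : ℕ) (h1 : 1 ≤ i) (h2 : i < k) :
    (P.coeff (i - 1) / (k.choose (i - 1) : ℝ)) *
        (P.coeff (i + 1) / (k.choose (i + 1) : ℝ)) ≤
      (P.coeff i / (k.choose i : ℝ)) ^ 2 := by
  obtain ⟨j, rfl⟩ : ∃ j, i = j + 1 := ⟨i - 1, by omega⟩
  obtain ⟨l, rfl⟩ : ∃ l, k = j + l + 2 := ⟨k - (j + 1) - 1, by omega⟩
  have hsP : P.Splits := splits_of_real_roots hroots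
  have hndP : P.natDegree ≤ j + l + 2 := natDegree_le_iff_degree_le.mpr (by exact_mod_cast hdeg)
  set g := derivative^[j] P with hgdef
  have hgs : g.Splits := splits_iterate_derivative j hsP
  have hgd : g.natDegree ≤ l + 2 := (P.natDegree_iterate_derivative j).trans (by omega)
  set h := reflect (l + 2) g with hhdef
  have hhs : h.Splits := splits_reflect hgd hgs
  have hhd : h.natDegree ≤ l + 2 := natDegree_reflect_le hgd
  set q := derivative^[l] h with hqdef
  have hqs : q.Splits := splits_iterate_derivative l hhs
  have hqd : q.natDegree ≤ 2 := (h.natDegree_iterate_derivative l).trans (by omega)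
  have key := quad_ineq hqd hqs
  -- compute the coefficients of q
  have hgc : ∀ c : ℕ, g.coeff c = ((c + j).descFactorial j : ℝ) * P.coeff (c + j) := by
    intro c
    rw [hgdef, coeff_iterate_derivative, nsmul_eq_mul]
  have hhc : ∀ c : ℕ, c ≤ l + 2 → h.coeff c = g.coeff (l + 2 - c) := by
    intro c hc
    rw [hhdef, coeff_reflect, revAt_le hc]
  have hq0 : q.coeff 0 = ((l).descFactorial l : ℝ) *
      (((2 + j).descFactorial j : ℝ) * P.coeff (2 + j)) := by
    rw [hqdef, coeff_iterate_derivative, nsmul_eq_mul, zero_add,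
      hhc l (by omega), show l + 2 - l = 2 from by omega, hgc 2]
  have hq1 : q.coeff 1 = ((1 + l).descFactorial l : ℝ) *
      (((1 + j).descFactorial j : ℝ) * P.coeff (1 + j)) := by
    rw [hqdef, coeff_iterate_derivative, nsmul_eq_mul,
      hhc (1 + l) (by omega), show l + 2 - (1 + l) = 1 from by omega, hgc 1]
  have hq2 : q.coeff 2 = ((2 + l).descFactorial l : ℝ) *
      (((j).descFactorial j : ℝ) * P.coeff j) := by
    rw [hqdef, coeff_iterate_derivative, nsmul_eq_mul,
      hhc (2 + l) (by omega), show l + 2 - (2 + l) = 0 from by omega, hgc 0, zero_add]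
  rw [hq0, hq1, hq2] at key
  -- clean up goal indices
  simp only [Nat.add_sub_cancel] at *
  set n := j + l + 2 with hn
  -- positivity facts
  have hCj : (0:ℝ) < (n.choose j : ℝ) := by exact_mod_cast Nat.choose_pos (by omega)
  have hCj1 : (0:ℝ) < (n.choose (j+1) : ℝ) := by exact_mod_cast Nat.choose_pos (by omega)
  have hCj2 : (0:ℝ) < (n.choose (j+2) : ℝ) := by exact_mod_cast Nat.choose_pos (by omega)
  rw [div_mul_div_comm, div_pow, div_le_div_iff₀ (by positivity) (by positivity)]
  -- the big identity
  have hfne : ∀ a : ℕ, ((a.factorial : ℕ) : ℝ) ≠ 0 := fun a => by positivity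
  have c0 : ((n.choose j : ℕ) : ℝ) = (n.factorial : ℝ) / ((j.factorial : ℝ) * ((l+2).factorial : ℝ)) := by
    rw [Nat.cast_choose ℝ (by omega : j ≤ n), show n - j = l + 2 from by omega]
  have c1 : ((n.choose (j+1) : ℕ) : ℝ) = (n.factorial : ℝ) / (((j+1).factorial : ℝ) * ((l+1).factorial : ℝ)) := by
    rw [Nat.cast_choose ℝ (by omega : j + 1 ≤ n), show n - (j+1) = l + 1 from by omega]
  have c2 : ((n.choose (j+2) : ℕ) : ℝ) = (n.factorial : ℝ) / (((j+2).factorial : ℝ) * ((l).factorial : ℝ)) := by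
    rw [Nat.cast_choose ℝ (by omega : j + 2 ≤ n), show n - (j+2) = l from by omega]
  have E : (((1 + l).descFactorial l : ℝ) * ((1 + j).descFactorial j : ℝ))^2 * ((n.choose (j+1) : ℕ) : ℝ)^2
      = 4 * (((l).descFactorial l : ℝ) * ((2 + j).descFactorial j : ℝ) *
          ((2 + l).descFactorial l : ℝ) * ((j).descFactorial j : ℝ)) *
        (((n.choose j : ℕ) : ℝ) * ((n.choose (j+2) : ℕ) : ℝ)) := by
    rw [Nat.descFactorial_self, Nat.descFactorial_self, cast_dF 1 l, cast_dF 1 j,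
      cast_dF 2 j, cast_dF 2 l, c0, c1, c2]
    rw [show 1 + l = l + 1 from by omega, show 1 + j = j + 1 from by omega,
      show 2 + l = l + 2 from by omega, show 2 + j = j + 2 from by omega]
    rw [show (l+2).factorial = (l+2) * ((l+1) * l.factorial) from by
        rw [Nat.factorial_succ, Nat.factorial_succ],
      show (j+2).factorial = (j+2) * ((j+1) * j.factorial) from by
        rw [Nat.factorial_succ, Nat.factorial_succ],
      show (l+1).factorial = (l+1) * l.factorial from Nat.factorial_succ l,
      show (j+1).factorial = (j+1) * j.factorial from Nat.factorial_succ j]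
    push_cast
    have := hfne j; have := hfne l; have := hfne n
    have hl1 : ((l:ℝ)+1) ≠ 0 := by positivity
    have hl2 : ((l:ℝ)+2) ≠ 0 := by positivity
    have hj1 : ((j:ℝ)+1) ≠ 0 := by positivity
    have hj2 : ((j:ℝ)+2) ≠ 0 := by positivity
    field_simp
    ring
  -- positivity of descFactorials
  have hdpos : ∀ a b : ℕ, (0:ℝ) < ((a + b).descFactorial b : ℝ) := by
    intro a b
    rw [cast_dF a b]
    positivity
  have h4 : (0:ℝ) < 4 * (((l).descFactorial l : ℝ) * ((2 + j).descFactorial j : ℝ) *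
      ((2 + l).descFactorial l : ℝ) * ((j).descFactorial j : ℝ)) := by
    have := hdpos 0 l; have := hdpos 2 j; have := hdpos 2 l; have := hdpos 0 j
    simp only [zero_add] at *
    positivity
  have hmul := mul_le_mul_of_nonneg_right key (sq_nonneg ((n.choose (j+1) : ℕ) : ℝ))
  have E2 := congrArg (fun x => x * P.coeff (1 + j) ^ 2) E
  rw [← mul_le_mul_iff_right₀ h4]
  simp only [show j + 1 + 1 = 2 + j from by omega] at *
  simp only [show j + 1 = 1 + j from by omega] at *
  nlinarith [hmul, E2]
end
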